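/- arXiv:0808.3291 — 14 statements merged into one kernel-verified Lean document; each statement's English description precedes it below -/
import Mathlib

section
/- For p > 1 and any complex sequence (a_n) in l^p, one has \sum_{n=1}^\infty |(1/n) \sum_{k=1}^n a_k|^p \le (p/(p-1))^p \sum_{n=1}^\infty |a_n|^p (Hardy's inequality). -/
open Finset Real

/-- `x ^ (p-1) * x = x ^ p` for `0 ≤ x`. -/
lemma hardy_rpow_aux {p : ℝ} (hp : 1 < p) {x : ℝ} (hx : 0 ≤ x) : x ^ (p - 1) * x = x ^ p := by
  rcases eq_or_lt_of_le hx with h | h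
  · rw [← h, Real.zero_rpow (by linarith), Real.zero_rpow (by linarith), zero_mul]
  · rw [← Real.rpow_add_one h.ne' (p - 1), sub_add_cancel]

/-- Key per-term inequality for Hardy's inequality. -/
lemma hardy_term {p : ℝ} (hp : 1 < p) (b : ℕ → ℝ) (hb : ∀ n, 0 ≤ b n) (n : ℕ) :
    (fun m => (∑ j ∈ range (m + 1), b j) / (m + 1) : ℕ → ℝ) n ^ p -
        (p / (p - 1)) * ((fun m => (∑ j ∈ range (m + 1), b j) / (m + 1) : ℕ → ℝ) n ^ (p - 1) * b n) ≤
      ((n : ℝ) * (fun m => (∑ j ∈ range (m + 1), b j) / (m + 1) : ℕ → ℝ) (n - 1) ^ p -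
        ((n : ℝ) + 1) * (fun m => (∑ j ∈ range (m + 1), b j) / (m + 1) : ℕ → ℝ) n ^ p) / (p - 1) := by
  set A : ℕ → ℝ := fun m => (∑ j ∈ range (m + 1), b j) / (m + 1) with hAdef
  set q := p / (p - 1) with hq
  have hp1 : (0:ℝ) < p - 1 := by linarith
  have hpq : p.HolderConjugate q := Real.HolderConjugate.conjExponent hp
  have hAnn : ∀ m, 0 ≤ A m := fun m =>
    div_nonneg (Finset.sum_nonneg fun j _ => hb j) (by positivity)
  have hA : ∀ m : ℕ, ((m : ℝ) + 1) * A m = ∑ j ∈ range (m + 1), b j := by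
    intro m
    have h0 : ((m : ℝ) + 1) ≠ 0 := by positivity
    simp only [hAdef]; field_simp
  have hA' : (n : ℝ) * A (n - 1) = ∑ j ∈ range n, b j := by
    cases n with
    | zero => simp
    | succ m => push_cast; simpa using hA m
  have hbn : b n = ((n : ℝ) + 1) * A n - (n : ℝ) * A (n - 1) := by
    rw [hA, hA', Finset.sum_range_succ]; ring
  -- Young's inequality: A n ^ (p-1) * A (n-1) ≤ A n ^ p / q + A (n-1) ^ p / p
  have young : A (n - 1) * A n ^ (p - 1) ≤ A (n - 1) ^ p / p + A n ^ p / q := by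
    have h := Real.young_inequality_of_nonneg (hAnn (n - 1))
      (Real.rpow_nonneg (hAnn n) (p - 1)) hpq
    have hpow : (A n ^ (p - 1)) ^ q = A n ^ p := by
      rw [← Real.rpow_mul (hAnn n), hpq.sub_one_mul_conj]
    rwa [hpow] at h
  -- combine
  have hqp : q * (p - 1) = p := by rw [hq]; field_simp
  have hwA : A n ^ (p - 1) * A n = A n ^ p := hardy_rpow_aux hp (hAnn n)
  have hnn : (0:ℝ) ≤ (n : ℝ) := Nat.cast_nonneg n
  have hy2 : q * ((n : ℝ) * (A (n - 1) * A n ^ (p - 1))) ≤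
      (n : ℝ) * A n ^ p + (n : ℝ) * A (n - 1) ^ p / (p - 1) := by
    have hqpos : 0 < q := hpq.symm.pos
    have := mul_le_mul_of_nonneg_left young (by positivity : (0:ℝ) ≤ q * n)
    calc q * ((n : ℝ) * (A (n - 1) * A n ^ (p - 1)))
        = q * (n : ℝ) * (A (n - 1) * A n ^ (p - 1)) := by ring
      _ ≤ q * (n : ℝ) * (A (n - 1) ^ p / p + A n ^ p / q) := this
      _ = (n : ℝ) * A n ^ p + (n : ℝ) * A (n - 1) ^ p / (p - 1) := by
          rw [hq]; field_simp; ring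
  rw [hbn]
  have expand : A n ^ p - q * (A n ^ (p - 1) * (((n : ℝ) + 1) * A n - (n : ℝ) * A (n - 1)))
      = A n ^ p - q * ((n : ℝ) + 1) * A n ^ p
        + q * ((n : ℝ) * (A (n - 1) * A n ^ (p - 1))) := by
    rw [← hwA]; ring
  rw [expand]
  have hq1 : 1 - q = -(1 / (p - 1)) := by rw [hq]; field_simp; ring
  have key : A n ^ p - q * ((n : ℝ) + 1) * A n ^ p + ((n : ℝ) * A n ^ p + (n : ℝ) * A (n - 1) ^ p / (p - 1))
      = ((n : ℝ) * A (n - 1) ^ p - ((n : ℝ) + 1) * A n ^ p) / (p - 1) := by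
    have hqv : q = p / (p - 1) := hq
    rw [hqv]; field_simp
    ring
  linarith [hy2]

/-- Partial-sum version of Hardy's inequality for nonnegative sequences. -/
lemma hardy_partial {p : ℝ} (hp : 1 < p) (b : ℕ → ℝ) (hb : ∀ n, 0 ≤ b n) (N : ℕ) :
    ∑ n ∈ range N, ((∑ j ∈ range (n + 1), b j) / (n + 1)) ^ p ≤
      (p / (p - 1)) ^ p * ∑ n ∈ range N, b n ^ p := by
  set A : ℕ → ℝ := fun m => (∑ j ∈ range (m + 1), b j) / (m + 1) with hAdef
  set q := p / (p - 1) with hq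
  have hp1 : (0:ℝ) < p - 1 := by linarith
  have hpq : p.HolderConjugate q := Real.HolderConjugate.conjExponent hp
  have hqpos : 0 < q := hpq.symm.pos
  have hAnn : ∀ m, 0 ≤ A m := fun m =>
    div_nonneg (Finset.sum_nonneg fun j _ => hb j) (by positivity)
  set T := ∑ n ∈ range N, A n ^ p with hT
  set U := ∑ n ∈ range N, A n ^ (p - 1) * b n with hU
  set B := ∑ n ∈ range N, b n ^ p with hB
  have hTnn : 0 ≤ T := Finset.sum_nonneg fun n _ => Real.rpow_nonneg (hAnn n) p
  have hBnn : 0 ≤ B := Finset.sum_nonneg fun n _ => Real.rpow_nonneg (hb n) p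
  -- Step 1: T ≤ q * U
  set D : ℕ → ℝ := fun m => (m : ℝ) * A (m - 1) ^ p with hD
  have step1 : T ≤ q * U := by
    have tel : ∑ n ∈ range N, (D n - D (n + 1)) = D 0 - D N :=
      Finset.sum_range_sub' D N
    have hterm : ∀ n ∈ range N, A n ^ p - q * (A n ^ (p - 1) * b n) ≤
        (D n - D (n + 1)) / (p - 1) := by
      intro n _
      have h := hardy_term hp b hb n
      have h2' : D (n + 1) = ((n : ℝ) + 1) * A n ^ p := by
        simp only [hD, Nat.add_sub_cancel]; push_cast; ring
      have h1' : D n = (n : ℝ) * A (n - 1) ^ p := rfl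
      rw [h2', h1']
      exact h
    have hsum := Finset.sum_le_sum hterm
    rw [Finset.sum_sub_distrib, ← Finset.mul_sum] at hsum
    have hsum2 : ∑ n ∈ range N, (D n - D (n + 1)) / (p - 1) = (D 0 - D N) / (p - 1) := by
      rw [← tel, Finset.sum_div]
    rw [hsum2] at hsum
    have hDN : 0 ≤ D N := mul_nonneg (Nat.cast_nonneg N) (Real.rpow_nonneg (hAnn _) p)
    have hD0 : D 0 = 0 := by simp [hD]
    have : (D 0 - D N) / (p - 1) ≤ 0 := by
      rw [hD0]
      exact div_nonpos_of_nonpos_of_nonneg (by linarith) (by linarith)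
    linarith
  -- Step 2: Hölder
  have step2 : U ≤ T ^ (1 / q) * B ^ (1 / p) := by
    have h := Real.inner_le_Lp_mul_Lq (range N) (fun n => A n ^ (p - 1)) b hpq.symm
    have e1 : ∑ n ∈ range N, |A n ^ (p - 1)| ^ q = T := by
      refine Finset.sum_congr rfl fun n _ => ?_
      rw [abs_of_nonneg (Real.rpow_nonneg (hAnn n) _), ← Real.rpow_mul (hAnn n),
        hpq.sub_one_mul_conj]
    have e2 : ∑ n ∈ range N, |b n| ^ p = B := by
      refine Finset.sum_congr rfl fun n _ => ?_
      rw [abs_of_nonneg (hb n)]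
    rw [e1, e2] at h
    exact h
  -- Step 3: conclude T ≤ q ^ p * B
  have step3 : T ≤ q ^ p * B := by
    rcases eq_or_lt_of_le hTnn with h0 | hTpos
    · rw [← h0]; positivity
    · have hsplit : T = T ^ (1 / q) * T ^ (1 / p) := by
        have hconj : 1 / q + 1 / p = 1 := by
          rw [one_div, one_div]; exact hpq.symm.inv_add_inv_eq_one
        rw [← Real.rpow_add hTpos, hconj, Real.rpow_one]
      have hTq : 0 < T ^ (1 / q) := Real.rpow_pos_of_pos hTpos _
      have h1 : T ^ (1 / q) * T ^ (1 / p) ≤ q * (T ^ (1 / q) * B ^ (1 / p)) := by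
        rw [← hsplit]; exact step1.trans (by nlinarith [step2, hqpos.le])
      have h2 : T ^ (1 / p) ≤ q * B ^ (1 / p) := by
        have := (mul_le_mul_iff_right₀ hTq).mp (by linarith [h1] : T ^ (1/q) * T ^ (1/p) ≤ T ^ (1/q) * (q * B ^ (1/p)))
        exact this
      have h3 : (T ^ (1 / p)) ^ p ≤ (q * B ^ (1 / p)) ^ p :=
        Real.rpow_le_rpow (Real.rpow_nonneg hTnn _) h2 (by linarith)
      rwa [← Real.rpow_mul hTnn, one_div_mul_cancel (by linarith : p ≠ 0), Real.rpow_one,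
        Real.mul_rpow hqpos.le (Real.rpow_nonneg hBnn _), ← Real.rpow_mul hBnn,
        one_div_mul_cancel (by linarith : p ≠ 0), Real.rpow_one] at h3
  exact step3

/-- Hardy's inequality for complex sequences in `l^p`. -/
theorem hardy_inequality (p : ℝ) (hp : 1 < p) (a : ℕ → ℂ)
    (ha : Summable fun n : ℕ => ‖a (n + 1)‖ ^ p) :
    ∑' n : ℕ, ‖(∑ k ∈ Finset.Icc 1 (n + 1), a k) / ((n : ℂ) + 1)‖ ^ p ≤
      (p / (p - 1)) ^ p * ∑' n : ℕ, ‖a (n + 1)‖ ^ p := by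
  set b : ℕ → ℝ := fun n => ‖a (n + 1)‖ with hbdef
  have hb : ∀ n, 0 ≤ b n := fun n => norm_nonneg _
  set q := p / (p - 1) with hq
  have hp1 : (0:ℝ) < p - 1 := by linarith
  have hqnn : 0 ≤ q ^ p := Real.rpow_nonneg (by positivity) p
  set B := ∑' n : ℕ, b n ^ p with hB
  have hBnn : 0 ≤ B := tsum_nonneg fun n => Real.rpow_nonneg (hb n) p
  set L : ℕ → ℝ := fun n => ‖(∑ k ∈ Finset.Icc 1 (n + 1), a k) / ((n : ℂ) + 1)‖ ^ p with hLdef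
  -- pointwise bound
  have hL : ∀ n, L n ≤ ((∑ j ∈ range (n + 1), b j) / (n + 1)) ^ p := by
    intro n
    have hnorm : ‖(∑ k ∈ Finset.Icc 1 (n + 1), a k) / ((n : ℂ) + 1)‖ ≤
        (∑ j ∈ range (n + 1), b j) / (n + 1) := by
      rw [norm_div]
      have hden : ‖(n : ℂ) + 1‖ = (n : ℝ) + 1 := by
        have : ((n : ℂ) + 1) = ((n + 1 : ℕ) : ℂ) := by push_cast; ring
        rw [this, Complex.norm_natCast]; push_cast; ring
      rw [hden]
      have hnum : ‖∑ k ∈ Finset.Icc 1 (n + 1), a k‖ ≤ ∑ j ∈ range (n + 1), b j := by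
        refine (norm_sum_le _ _).trans (le_of_eq ?_)
        rw [← Finset.Ico_add_one_right_eq_Icc, Finset.sum_Ico_eq_sum_range]
        refine Finset.sum_congr rfl fun j _ => ?_
        simp [hbdef, Nat.add_comm]
      gcongr
    exact Real.rpow_le_rpow (norm_nonneg _) hnorm (by linarith)
  have key : ∀ N, ∑ n ∈ range N, ((∑ j ∈ range (n + 1), b j) / (n + 1)) ^ p ≤ q ^ p * B := by
    intro N
    refine (hardy_partial hp b hb N).trans ?_
    exact mul_le_mul_of_nonneg_left
      (Summable.sum_le_tsum (range N) (fun n _ => Real.rpow_nonneg (hb n) p) ha) hqnn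
  have hLb : ∀ N, ∑ n ∈ range N, L n ≤ q ^ p * B := fun N =>
    (Finset.sum_le_sum fun n _ => hL n).trans (key N)
  exact Real.tsum_le_of_sum_range_le (fun n => Real.rpow_nonneg (norm_nonneg _) p) hLb
end

section
/- For any sequence (a_n) of non-negative reals with convergent sum, \sum_{n=1}^\infty (\prod_{k=1}^n a_k)^{1/n} \le e \sum_{n=1}^\infty a_n (Carleman's inequality). -/
open Finset

noncomputable def carlC (k : ℕ) : ℝ := ((k : ℝ) + 1) ^ k / (k : ℝ) ^ (k - 1)

lemma carlC_prod : ∀ m : ℕ, 1 ≤ m →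
    ∏ k ∈ Icc 1 m, carlC k = ((m : ℝ) + 1) ^ m := by
  intro m hm
  induction m with
  | zero => omega
  | succ n ih =>
    rcases Nat.eq_or_lt_of_le hm with h | h
    · simp [← h, carlC]
    · have hn : 1 ≤ n := by omega
      rw [Finset.prod_Icc_succ_top (by omega), ih hn]
      have hpos : ((n : ℝ) + 1) ≠ 0 := by positivity
      simp only [carlC]
      push_cast
      field_simp

lemma carlC_le (k : ℕ) (hk : 1 ≤ k) : carlC k ≤ Real.exp 1 * k := by
  have hk0 : (0:ℝ) < k := by exact_mod_cast hk
  have h1 : ((k : ℝ) + 1) ^ k ≤ (Real.exp (1 / k)) ^ k * (k:ℝ) ^ k := by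
    rw [← mul_pow]
    apply pow_le_pow_left₀ (by positivity)
    have := Real.add_one_le_exp (1 / (k:ℝ))
    calc (k:ℝ) + 1 = (1/(k:ℝ) + 1) * k := by field_simp; ring
    _ ≤ Real.exp (1/(k:ℝ)) * k := by
        apply mul_le_mul_of_nonneg_right this (le_of_lt hk0)
  have h2 : (Real.exp (1 / (k:ℝ))) ^ k = Real.exp 1 := by
    rw [← Real.exp_nat_mul]
    congr 1
    field_simp
  rw [carlC]
  rw [div_le_iff₀ (by positivity)]
  calc ((k:ℝ)+1)^k ≤ Real.exp 1 * (k:ℝ)^k := by rw [← h2]; exact h1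
    _ = Real.exp 1 * k * (k:ℝ)^(k-1) := by
        have hkk : (k:ℝ)^k = (k:ℝ)^(k-1) * k := by
          rw [← pow_succ, Nat.sub_add_cancel hk]
        rw [hkk]; ring

lemma carl_tele_eq (k : ℕ) (hk : 1 ≤ k) :
    ∀ N, k ≤ N + 1 → ∑ m ∈ Icc k N, (1/((m:ℝ)*((m:ℝ)+1))) = 1/k - 1/((N:ℝ)+1) := by
  intro N
  induction N with
  | zero =>
    intro h
    have : k = 1 := by omega
    subst this; simp
  | succ n ih =>
    intro h
    rcases Nat.eq_or_lt_of_le h with h1 | h1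
    · rw [Finset.Icc_eq_empty (by omega)]
      subst h1
      push_cast
      simp
    · have hk' : k ≤ n + 1 := by omega
      rw [Finset.sum_Icc_succ_top hk', ih hk']
      have h0 : ((k:ℝ)) ≠ 0 := by positivity
      have h2 : ((n:ℝ)+1) ≠ 0 := by positivity
      have h3 : ((n:ℝ)+1+1) ≠ 0 := by positivity
      push_cast
      field_simp
      ring

lemma carl_tele_le (k N : ℕ) (hk : 1 ≤ k) :
    ∑ m ∈ Icc k N, (1/((m:ℝ)*((m:ℝ)+1))) ≤ 1/k := by
  rcases le_or_gt k (N+1) with h | h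
  · rw [carl_tele_eq k hk N h]
    have : (0:ℝ) ≤ 1/((N:ℝ)+1) := by positivity
    linarith
  · rw [Finset.Icc_eq_empty (by omega)]
    simp

lemma carl_amgm (a : ℕ → ℝ) (ha : ∀ n, 0 ≤ a n) (m : ℕ) (hm : 1 ≤ m) :
    (∏ k ∈ Icc 1 m, a k) ^ (1/(m:ℝ)) ≤
      (1/((m:ℝ)*((m:ℝ)+1))) * ∑ k ∈ Icc 1 m, carlC k * a k := by
  have hm0 : (0:ℝ) < m := by exact_mod_cast hm
  have hC : ∀ k, 0 ≤ carlC k := by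
    intro k; unfold carlC; positivity
  have hge := Real.geom_mean_le_arith_mean_weighted (Icc 1 m)
    (fun _ => 1/(m:ℝ)) (fun k => carlC k * a k)
    (fun i _ => by positivity)
    (by simp [Nat.card_Icc]; field_simp)
    (fun i _ => mul_nonneg (hC i) (ha i))
  have hlhs : (∏ k ∈ Icc 1 m, (carlC k * a k) ^ (1/(m:ℝ)))
      = ((m:ℝ)+1) * (∏ k ∈ Icc 1 m, a k) ^ (1/(m:ℝ)) := by
    rw [Real.finset_prod_rpow _ _ (fun i _ => mul_nonneg (hC i) (ha i))]
    rw [Finset.prod_mul_distrib, carlC_prod m hm]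
    rw [Real.mul_rpow (by positivity) (Finset.prod_nonneg (fun i _ => ha i))]
    congr 1
    rw [← Real.rpow_natCast ((m:ℝ)+1) m, ← Real.rpow_mul (by positivity)]
    rw [mul_one_div, div_self (ne_of_gt hm0), Real.rpow_one]
  rw [hlhs] at hge
  have h2 : ∑ i ∈ Icc 1 m, 1/(m:ℝ) * (carlC i * a i)
      = (1/(m:ℝ)) * ∑ k ∈ Icc 1 m, carlC k * a k := by
    rw [Finset.mul_sum]
  rw [h2] at hge
  have hmp : (0:ℝ) < (m:ℝ)+1 := by positivity
  rw [show (1/((m:ℝ)*((m:ℝ)+1))) * ∑ k ∈ Icc 1 m, carlC k * a k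
      = ((1/(m:ℝ)) * ∑ k ∈ Icc 1 m, carlC k * a k) / ((m:ℝ)+1) by field_simp]
  rw [le_div_iff₀ hmp, mul_comm]
  exact hge

lemma carlC_nonneg (k : ℕ) : 0 ≤ carlC k := by unfold carlC; positivity

lemma carl_reindex (f : ℕ → ℝ) (N : ℕ) :
    ∑ k ∈ Icc 1 N, f k = ∑ n ∈ range N, f (n+1) := by
  rw [← Finset.Ico_add_one_right_eq_Icc, Finset.sum_Ico_eq_sum_range]
  exact Finset.sum_congr (by norm_num) (fun i _ => by rw [add_comm])

/-- Carleman's inequality. -/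
theorem carleman_inequality (a : ℕ → ℝ) (ha : ∀ n, 0 ≤ a n)
    (hs : Summable fun n : ℕ => a (n + 1)) :
    ∑' n : ℕ, (∏ k ∈ Finset.Icc 1 (n + 1), a k) ^ (1 / ((n : ℝ) + 1)) ≤
      Real.exp 1 * ∑' n : ℕ, a (n + 1) := by
  apply Real.tsum_le_of_sum_range_le
  · intro n; exact Real.rpow_nonneg (Finset.prod_nonneg fun i _ => ha i) _
  intro N
  have h0 : ∑ n ∈ range N, (∏ k ∈ Icc 1 (n + 1), a k) ^ (1 / ((n : ℝ) + 1))
      = ∑ m ∈ Icc 1 N, (∏ k ∈ Icc 1 m, a k) ^ (1/(m:ℝ)) := by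
    rw [carl_reindex (fun m => (∏ k ∈ Icc 1 m, a k) ^ (1/(m:ℝ))) N]
    apply Finset.sum_congr rfl
    intro i _
    congr 1
    push_cast
    ring
  rw [h0]
  calc ∑ m ∈ Icc 1 N, (∏ k ∈ Icc 1 m, a k) ^ (1/(m:ℝ))
      ≤ ∑ m ∈ Icc 1 N, (1/((m:ℝ)*((m:ℝ)+1))) * ∑ k ∈ Icc 1 m, carlC k * a k := by
        apply Finset.sum_le_sum; intro m hm
        exact carl_amgm a ha m (Finset.mem_Icc.mp hm).1
    _ = ∑ m ∈ Icc 1 N, ∑ k ∈ Icc 1 m, (1/((m:ℝ)*((m:ℝ)+1))) * (carlC k * a k) := by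
        exact Finset.sum_congr rfl (fun m _ => Finset.mul_sum _ _ _)
    _ = ∑ k ∈ Icc 1 N, ∑ m ∈ Icc k N, (1/((m:ℝ)*((m:ℝ)+1))) * (carlC k * a k) := by
        apply Finset.sum_comm'
        intro m k; simp only [Finset.mem_Icc]; omega
    _ = ∑ k ∈ Icc 1 N, (∑ m ∈ Icc k N, (1/((m:ℝ)*((m:ℝ)+1)))) * (carlC k * a k) := by
        exact Finset.sum_congr rfl (fun k _ => (Finset.sum_mul _ _ _).symm)
    _ ≤ ∑ k ∈ Icc 1 N, (1/(k:ℝ)) * (carlC k * a k) := by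
        apply Finset.sum_le_sum; intro k hk
        exact mul_le_mul_of_nonneg_right
          (carl_tele_le k N (Finset.mem_Icc.mp hk).1)
          (mul_nonneg (carlC_nonneg k) (ha k))
    _ ≤ ∑ k ∈ Icc 1 N, Real.exp 1 * a k := by
        apply Finset.sum_le_sum; intro k hk
        have hk1 := (Finset.mem_Icc.mp hk).1
        have hk0 : (0:ℝ) < k := by exact_mod_cast hk1
        calc (1/(k:ℝ)) * (carlC k * a k)
            ≤ (1/(k:ℝ)) * ((Real.exp 1 * k) * a k) := by
              apply mul_le_mul_of_nonneg_left
                (mul_le_mul_of_nonneg_right (carlC_le k hk1) (ha k)) (by positivity)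
          _ = Real.exp 1 * a k := by field_simp
    _ = Real.exp 1 * ∑ k ∈ Icc 1 N, a k := (Finset.mul_sum _ _ _).symm
    _ ≤ Real.exp 1 * ∑' n : ℕ, a (n+1) := by
        apply mul_le_mul_of_nonneg_left _ (Real.exp_pos 1).le
        rw [carl_reindex a N]
        exact Summable.sum_le_tsum (range N) (fun i _ => ha _) hs
end

section
/- Let 1 < p < \infty and let (\lambda_n) be non-negative reals with \lambda_1 > 0, \Lambda_n = \sum_{i=1}^n \lambda_i. If there exists 0 < L < p such that for all n \ge 1, \Lambda_{n+1}/\lambda_{n+1} \le (\Lambda_n/\lambda_n)(1 - L\lambda_n/(p\Lambda_n))^{1-p} + L/p, then for every non-negative sequence (a_n), \sum_{n=1}^\infty ((\sum_{k=1}^n \lambda_k a_k)/\Lambda_n)^p \le (p/(p-L))^p \sum_{n=1}^\infty a_n^p. -/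
/-- Two-point convexity (Hölder) inequality used in the induction step. -/
lemma key_convex_ineq (p : ℝ) (hp : 1 < p) (b d x z : ℝ) (hb : 0 ≤ b) (hd : 0 < d)
    (hx : 0 ≤ x) (hz : 0 ≤ z) :
    (b + d) ^ (1 - p) * (b * x + z) ^ p ≤ b * x ^ p + d ^ (1 - p) * z ^ p := by
  have hs : 0 < b + d := by linarith
  have hcv := convexOn_rpow hp.le
  have hzd : (0:ℝ) ≤ z / d := by positivity
  have h1 := hcv.2 (Set.mem_Ici.2 hx) (Set.mem_Ici.2 hzd)
    (show (0:ℝ) ≤ b / (b + d) by positivity) (show (0:ℝ) ≤ d / (b + d) by positivity)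
    (show b / (b + d) + d / (b + d) = 1 by field_simp)
  simp only [smul_eq_mul] at h1
  have e1 : b / (b + d) * x + d / (b + d) * (z / d) = (b * x + z) / (b + d) := by
    field_simp
  rw [e1] at h1
  rw [Real.div_rpow (by positivity) hs.le] at h1
  rw [Real.div_rpow hz hd.le] at h1
  have hsp : (0:ℝ) < (b + d) ^ p := Real.rpow_pos_of_pos hs p
  have hdp : (0:ℝ) < d ^ p := Real.rpow_pos_of_pos hd p
  have h2 := mul_le_mul_of_nonneg_left h1 hs.le
  have e2 : (b + d) ^ (1 - p) = (b + d) / (b + d) ^ p := by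
    rw [Real.rpow_sub hs, Real.rpow_one]
  have e3 : d ^ (1 - p) = d / d ^ p := by
    rw [Real.rpow_sub hd, Real.rpow_one]
  rw [e2, e3]
  calc (b + d) / (b + d) ^ p * (b * x + z) ^ p
      = (b + d) * ((b * x + z) ^ p / (b + d) ^ p) := by ring
    _ ≤ (b + d) * (b / (b + d) * x ^ p + d / (b + d) * (z ^ p / d ^ p)) := h2
    _ = b * x ^ p + d / d ^ p * z ^ p := by
        field_simp

/-- Theorem 1.1 (Gao): a sufficient condition for the `l^p` norm bound `p/(p-L)`
for weighted mean matrices. -/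
theorem lp_norm_weighted_mean (p L : ℝ) (hp : 1 < p) (hL0 : 0 < L) (hLp : L < p)
    (lam Lam : ℕ → ℝ) (hlam : ∀ n, 0 < lam n)
    (hLam : ∀ n, Lam n = ∑ i ∈ Finset.Icc 1 n, lam i)
    (hcond : ∀ n : ℕ, 1 ≤ n →
      Lam (n + 1) / lam (n + 1) ≤
        (Lam n / lam n) * (1 - L * lam n / (p * Lam n)) ^ (1 - p) + L / p)
    (a : ℕ → ℝ) (ha : ∀ n, 0 ≤ a n)
    (hsum : Summable fun n : ℕ => a (n + 1) ^ p) :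
    ∑' n : ℕ, ((∑ k ∈ Finset.Icc 1 (n + 1), lam k * a k) / Lam (n + 1)) ^ p ≤
      (p / (p - L)) ^ p * ∑' n : ℕ, a (n + 1) ^ p := by
  have hp0 : (0:ℝ) < p := lt_trans one_pos hp
  set d : ℝ := (p - L) / p with hdef
  have hd : 0 < d := div_pos (by linarith) hp0
  have hd1 : d < 1 := by
    rw [hdef, div_lt_one hp0]; linarith
  have hLp' : L / p = 1 - d := by
    rw [hdef]; field_simp; ring
  have hLamnn : ∀ n, 0 ≤ Lam n := by
    intro n; rw [hLam n]
    exact Finset.sum_nonneg fun i _ => (hlam i).le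
  have hLampos : ∀ n, 1 ≤ n → 0 < Lam n := by
    intro n hn
    rw [hLam n]
    exact Finset.sum_pos (fun i _ => hlam i)
      ⟨1, Finset.mem_Icc.2 ⟨le_refl 1, hn⟩⟩
  have hLamsucc : ∀ n : ℕ, Lam (n + 1) = Lam n + lam (n + 1) := by
    intro n
    rw [hLam, hLam]
    exact Finset.sum_Icc_succ_top (Nat.le_add_left 1 n) lam
  set A : ℕ → ℝ := fun m => (∑ k ∈ Finset.Icc 1 m, lam k * a k) / Lam m with hA
  have hAnn : ∀ m, 0 ≤ A m :=
    fun m => div_nonneg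
      (Finset.sum_nonneg fun k _ => mul_nonneg (hlam k).le (ha k)) (hLamnn m)
  have hLamA : ∀ m, Lam m * A m = ∑ k ∈ Finset.Icc 1 m, lam k * a k := by
    intro m
    rcases Nat.eq_zero_or_pos m with hm | hm
    · subst hm; simp [hA, hLam]
    · exact mul_div_cancel₀ _ (hLampos m hm).ne'
  have hrec : ∀ N : ℕ,
      (Lam (N + 1) / lam (N + 1)) * A (N + 1) = (Lam N / lam (N + 1)) * A N + a (N + 1) := by
    intro N
    have h1 : Lam (N + 1) * A (N + 1) = Lam N * A N + lam (N + 1) * a (N + 1) := by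
      rw [hLamA, hLamA]
      exact Finset.sum_Icc_succ_top (Nat.le_add_left 1 N) _
    have hl : lam (N + 1) ≠ 0 := (hlam (N + 1)).ne'
    field_simp
    linarith [h1]
  -- rewritten condition
  have hcond' : ∀ n : ℕ, 1 ≤ n →
      Lam n / lam (n + 1) + d ≤
        (Lam n / lam n) ^ p * (Lam n / lam n - (1 - d)) ^ (1 - p) := by
    intro n hn
    have hc := hcond n hn
    have hLn : 0 < Lam n := hLampos n hn
    have hln : 0 < lam n := hlam n
    have hln1 : 0 < lam (n + 1) := hlam (n + 1)
    set t : ℝ := Lam n / lam n with hts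
    have ht1 : 1 ≤ t := by
      rw [hts, le_div_iff₀ hln, one_mul, hLam]
      exact Finset.single_le_sum (f := lam) (fun i _ => (hlam i).le)
        (Finset.mem_Icc.2 ⟨hn, le_refl n⟩)
    have htpos : 0 < t := lt_of_lt_of_le one_pos ht1
    have htd : 0 < t - (1 - d) := by linarith
    have hbase : 1 - L * lam n / (p * Lam n) = (t - (1 - d)) / t := by
      rw [hts, hdef]
      field_simp
      ring
    rw [hbase] at hc
    have hsplit : Lam (n + 1) / lam (n + 1) = Lam n / lam (n + 1) + 1 := by
      rw [hLamsucc n, add_div, div_self hln1.ne']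
    have hpow : t * ((t - (1 - d)) / t) ^ (1 - p) = t ^ p * (t - (1 - d)) ^ (1 - p) := by
      rw [Real.div_rpow htd.le htpos.le,
        show t ^ (1 - p) = t / t ^ p by rw [Real.rpow_sub htpos, Real.rpow_one]]
      have hq : (0:ℝ) < t ^ p := Real.rpow_pos_of_pos htpos p
      field_simp
    rw [hsplit, hLp'] at hc
    rw [← hpow]
    linarith
  -- main induction
  have main : ∀ N : ℕ,
      ∑ m ∈ Finset.Icc 1 N, A m ^ p + 1 / d * (Lam N / lam (N + 1)) * A N ^ p ≤
        (1 / d) ^ p * ∑ m ∈ Finset.Icc 1 N, a m ^ p := by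
    intro N
    induction N with
    | zero =>
      have h0 : Lam 0 = 0 := by rw [hLam]; simp
      simp [h0]
    | succ N ih =>
      set x : ℝ := A N with hx
      set y : ℝ := A (N + 1) with hy
      set z : ℝ := a (N + 1) with hz
      set b : ℝ := Lam N / lam (N + 1) with hbs
      set b' : ℝ := Lam (N + 1) / lam (N + 2) with hb's
      set t : ℝ := Lam (N + 1) / lam (N + 1) with hts
      have hb : 0 ≤ b := div_nonneg (hLamnn N) (hlam (N + 1)).le
      have htb : t = b + 1 := by
        rw [hts, hbs, hLamsucc N, add_div, div_self (hlam (N + 1)).ne']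
      have hty : t * y = b * x + z := hrec N
      have hstep := hcond' (N + 1) (Nat.le_add_left 1 N)
      -- hstep : b' + d ≤ t ^ p * (t - (1 - d)) ^ (1 - p)
      have htd : t - (1 - d) = b + d := by rw [htb]; ring
      have hypnn : (0:ℝ) ≤ y ^ p := Real.rpow_nonneg (hAnn (N + 1)) p
      have ht0 : (0:ℝ) ≤ t := by rw [htb]; linarith
      have hkey := key_convex_ineq p hp b d x z hb hd (hAnn N) (ha (N + 1))
      have core : y ^ p + 1 / d * b' * y ^ p ≤ 1 / d * b * x ^ p + (1 / d) ^ p * z ^ p := by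
        have c1 : (b' + d) * y ^ p ≤ t ^ p * (t - (1 - d)) ^ (1 - p) * y ^ p :=
          mul_le_mul_of_nonneg_right hstep hypnn
        have c2 : t ^ p * (t - (1 - d)) ^ (1 - p) * y ^ p
            = (b + d) ^ (1 - p) * (b * x + z) ^ p := by
          rw [htd, ← hty, Real.mul_rpow ht0 (hAnn (N + 1))]
          ring
        have c3 : (b' + d) * y ^ p ≤ b * x ^ p + d ^ (1 - p) * z ^ p :=
          le_trans c1 (by rw [c2]; exact hkey)
        have c4 := mul_le_mul_of_nonneg_left c3 (le_of_lt (by positivity : (0:ℝ) < 1 / d))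
        have e4 : 1 / d * ((b' + d) * y ^ p) = y ^ p + 1 / d * b' * y ^ p := by
          field_simp
          ring
        have e5 : 1 / d * (b * x ^ p + d ^ (1 - p) * z ^ p)
            = 1 / d * b * x ^ p + (1 / d) ^ p * z ^ p := by
          have : (1 / d) ^ p = 1 / d * d ^ (1 - p) := by
            rw [Real.rpow_sub hd, Real.rpow_one, one_div,
              Real.inv_rpow hd.le]
            field_simp
          rw [this]
          ring
        rw [e4, e5] at c4
        exact c4
      rw [Finset.sum_Icc_succ_top (Nat.le_add_left 1 N),
        Finset.sum_Icc_succ_top (Nat.le_add_left 1 N)]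
      have hrhs : (1 / d) ^ p * (∑ m ∈ Finset.Icc 1 N, a m ^ p + a (N + 1) ^ p)
          = (1 / d) ^ p * ∑ m ∈ Finset.Icc 1 N, a m ^ p + (1 / d) ^ p * z ^ p := by
        rw [hz]; ring
      rw [hrhs]
      have hsum' : ∑ m ∈ Finset.Icc 1 N, A m ^ p + 1 / d * b * x ^ p
          ≤ (1 / d) ^ p * ∑ m ∈ Finset.Icc 1 N, a m ^ p := ih
      linarith
  -- conclusion
  have hKnn : (0:ℝ) ≤ (1 / d) ^ p := Real.rpow_nonneg (by positivity) p
  have hreidx : ∀ (f : ℕ → ℝ) (N : ℕ),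
      ∑ m ∈ Finset.Icc 1 N, f m = ∑ i ∈ Finset.range N, f (i + 1) := by
    intro f N
    rw [← Finset.Ico_add_one_right_eq_Icc, Finset.sum_Ico_eq_sum_range]
    simp [add_comm]
  have hsum_le : ∀ N : ℕ,
      ∑ i ∈ Finset.range N, A (i + 1) ^ p ≤ (1 / d) ^ p * ∑' n : ℕ, a (n + 1) ^ p := by
    intro N
    rw [← hreidx (fun m => A m ^ p) N]
    have h2 := main N
    have h3 : 0 ≤ 1 / d * (Lam N / lam (N + 1)) * A N ^ p := by
      have := Real.rpow_nonneg (hAnn N) p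
      have hb : 0 ≤ Lam N / lam (N + 1) := div_nonneg (hLamnn N) (hlam (N + 1)).le
      positivity
    have h4 : ∑ m ∈ Finset.Icc 1 N, A m ^ p ≤ (1 / d) ^ p * ∑ m ∈ Finset.Icc 1 N, a m ^ p := by
      linarith
    refine h4.trans (mul_le_mul_of_nonneg_left ?_ hKnn)
    rw [hreidx (fun m => a m ^ p) N]
    exact Summable.sum_le_tsum (Finset.range N)
      (fun i _ => Real.rpow_nonneg (ha (i + 1)) p) hsum
  have hfinal := Real.tsum_le_of_sum_range_le
    (fun n => Real.rpow_nonneg (hAnn (n + 1)) p) hsum_le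
  have hpdL : p / (p - L) = 1 / d := by
    rw [hdef, one_div_div]
  rw [hpdL]
  exact hfinal
end

section
/- Let 1 < p < \infty, (\lambda_n) positive reals, \Lambda_n = \sum_{i=1}^n \lambda_i. If L = \sup_n (\Lambda_{n+1}/\lambda_{n+1} - \Lambda_n/\lambda_n) < p, then for every non-negative sequence (a_n), \sum_{n=1}^\infty ((\sum_{k=1}^n \lambda_k a_k)/\Lambda_n)^p \le (p/(p-L))^p \sum_{n=1}^\infty a_n^p (Cartlidge's theorem). -/
/-- Cartlidge's theorem. -/
theorem cartlidge (p L : ℝ) (hp : 1 < p)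
    (lam Lam : ℕ → ℝ) (hlam : ∀ n, 0 < lam n)
    (hLam : ∀ n, Lam n = ∑ i ∈ Finset.Icc 1 n, lam i)
    (hbdd : BddAbove (Set.range fun n : ℕ =>
      Lam (n + 2) / lam (n + 2) - Lam (n + 1) / lam (n + 1)))
    (hLdef : L = ⨆ n : ℕ, (Lam (n + 2) / lam (n + 2) - Lam (n + 1) / lam (n + 1)))
    (hLp : L < p)
    (a : ℕ → ℝ) (ha : ∀ n, 0 ≤ a n)
    (hsum : Summable fun n : ℕ => a (n + 1) ^ p) :
    ∑' n : ℕ, ((∑ k ∈ Finset.Icc 1 (n + 1), lam k * a k) / Lam (n + 1)) ^ p ≤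
      (p / (p - L)) ^ p * ∑' n : ℕ, a (n + 1) ^ p := by
  have hp0 : (0:ℝ) < p := lt_trans one_pos hp
  have hp1 : (0:ℝ) < p - 1 := sub_pos.2 hp
  have hpL : (0:ℝ) < p - L := sub_pos.2 hLp
  set c : ℝ := p / (p - L) with hc_def
  have hc : 0 < c := div_pos hp0 hpL
  set q : ℝ := p / (p - 1) with hq_def
  have hpq : p.HolderConjugate q := Real.HolderConjugate.conjExponent hp
  have hstep : ∀ n : ℕ, Lam (n + 1) = Lam n + lam (n + 1) := by
    intro n
    rw [hLam (n + 1), hLam n,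
      Finset.sum_Icc_succ_top (Nat.one_le_iff_ne_zero.2 (Nat.succ_ne_zero n))]
  have hLam0 : Lam 0 = 0 := by simp [hLam 0]
  have hLamnn : ∀ n : ℕ, 0 ≤ Lam n := by
    intro n
    rw [hLam n]
    exact Finset.sum_nonneg fun i _ => (hlam i).le
  have hLampos : ∀ n : ℕ, 0 < Lam (n + 1) := by
    intro n
    rw [hstep n]
    exact add_pos_of_nonneg_of_pos (hLamnn n) (hlam (n + 1))
  set A : ℕ → ℝ := fun n => (∑ k ∈ Finset.Icc 1 n, lam k * a k) / Lam n with hA_def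
  have hAnn : ∀ n, 0 ≤ A n := fun n =>
    div_nonneg (Finset.sum_nonneg fun i _ => mul_nonneg (hlam i).le (ha i)) (hLamnn n)
  have hLA : ∀ n, Lam n * A n = ∑ k ∈ Finset.Icc 1 n, lam k * a k := by
    intro n
    cases n with
    | zero => simp [hA_def, hLam0]
    | succ m => exact mul_div_cancel₀ _ (hLampos m).ne'
  have hrec : ∀ n : ℕ, lam (n + 1) * a (n + 1) = Lam (n + 1) * A (n + 1) - Lam n * A n := by
    intro n
    rw [hLA, hLA, Finset.sum_Icc_succ_top (Nat.one_le_iff_ne_zero.2 (Nat.succ_ne_zero n))]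
    ring
  have hsup : ∀ n : ℕ, Lam (n + 2) / lam (n + 2) - Lam (n + 1) / lam (n + 1) ≤ L := by
    intro n
    rw [hLdef]
    exact le_ciSup hbdd n
  -- powers of A
  have hApow : ∀ n, A n * A n ^ (p - 1) = A n ^ p := by
    intro n
    have h1p : (1:ℝ) + (p - 1) ≠ 0 := by
      rw [show (1:ℝ) + (p - 1) = p by ring]; exact hp0.ne'
    nth_rewrite 1 [← Real.rpow_one (A n)]
    rw [← Real.rpow_add' (hAnn n) h1p, show (1:ℝ) + (p - 1) = p by ring]
  -- Young's inequality, first form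
  have hYoung : ∀ n : ℕ,
      p * (A n * A (n + 1) ^ (p - 1)) ≤ A n ^ p + (p - 1) * A (n + 1) ^ p := by
    intro n
    have h := Real.young_inequality_of_nonneg (hAnn n)
      (Real.rpow_nonneg (hAnn (n + 1)) (p - 1)) hpq
    have hZq : (A (n + 1) ^ (p - 1)) ^ q = A (n + 1) ^ p := by
      rw [← Real.rpow_mul (hAnn (n + 1)), hpq.sub_one_mul_conj]
    rw [hZq] at h
    have hdiv : p * (A n ^ p / p + A (n + 1) ^ p / q)
        = A n ^ p + (p - 1) * A (n + 1) ^ p := by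
      rw [hq_def]
      field_simp
    linarith [mul_le_mul_of_nonneg_left h hp0.le]
  -- pointwise key inequality
  have key1 : ∀ n : ℕ,
      (p - L) * A (n + 1) ^ p +
        ((Lam (n + 1) / lam (n + 2)) * A (n + 1) ^ p - (Lam n / lam (n + 1)) * A n ^ p)
        ≤ p * (a (n + 1) * A (n + 1) ^ (p - 1)) := by
    intro n
    set r := Lam (n + 1) / lam (n + 1) with hr
    set w := Lam n / lam (n + 1) with hw
    set s := Lam (n + 1) / lam (n + 2) with hs
    have hl1 : lam (n + 1) ≠ 0 := (hlam (n + 1)).ne'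
    have hl2 : lam (n + 2) ≠ 0 := (hlam (n + 2)).ne'
    have hwr : w = r - 1 := by
      rw [hw, hr, hstep n, add_div, div_self hl1]; ring
    have hw0 : 0 ≤ w := div_nonneg (hLamnn n) (hlam (n + 1)).le
    have hr1 : 1 ≤ r := by linarith [hwr ▸ hw0]
    have hsL : s ≤ L + r - 1 := by
      have h := hsup n
      have h2 : Lam (n + 2) / lam (n + 2) = s + 1 := by
        rw [hs, hstep (n + 1), add_div, div_self hl2]
      rw [h2] at h; linarith
    have ea : a (n + 1) = r * A (n + 1) - w * A n := by
      rw [hr, hw]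
      field_simp
      linarith [hrec n]
    have f1 : p * (a (n + 1) * A (n + 1) ^ (p - 1))
        = p * r * (A (n + 1) * A (n + 1) ^ (p - 1))
          - (r - 1) * (p * (A n * A (n + 1) ^ (p - 1))) := by
      rw [ea, ← hwr]; ring
    have H1 : 0 ≤ (r - 1) *
        (A n ^ p + (p - 1) * A (n + 1) ^ p - p * (A n * A (n + 1) ^ (p - 1))) :=
      mul_nonneg (by linarith) (by linarith [hYoung n])
    have H2 : 0 ≤ (r + p - 1 - (p - L + s)) * A (n + 1) ^ p :=
      mul_nonneg (by linarith) (Real.rpow_nonneg (hAnn (n + 1)) p)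
    rw [f1, hApow (n + 1), hwr]
    nlinarith [H1, H2]
  -- summed first inequality
  have sum1 : ∀ N : ℕ,
      (p - L) * ∑ n ∈ Finset.range N, A (n + 1) ^ p
        ≤ p * ∑ n ∈ Finset.range N, a (n + 1) * A (n + 1) ^ (p - 1) := by
    intro N
    have hle := Finset.sum_le_sum (fun n (_ : n ∈ Finset.range N) => key1 n)
    rw [Finset.sum_add_distrib,
      Finset.sum_range_sub (fun n => (Lam n / lam (n + 1)) * A n ^ p) N,
      ← Finset.mul_sum, ← Finset.mul_sum] at hle
    have h0 : (Lam 0 / lam (0 + 1)) * A 0 ^ p = 0 := by simp [hLam0]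
    have hN : 0 ≤ (Lam N / lam (N + 1)) * A N ^ p :=
      mul_nonneg (div_nonneg (hLamnn N) (hlam _).le) (Real.rpow_nonneg (hAnn N) p)
    linarith
  -- second Young inequality
  have key2 : ∀ n : ℕ,
      a (n + 1) * A (n + 1) ^ (p - 1)
        ≤ c ^ (p - 1) * a (n + 1) ^ p / p + (p - 1) / (p * c) * A (n + 1) ^ p := by
    intro n
    set e : ℝ := (p - 1) / p with he
    have h := Real.young_inequality_of_nonneg
      (mul_nonneg (ha (n + 1)) (Real.rpow_nonneg hc.le e))
      (mul_nonneg (Real.rpow_nonneg hc.le (-e)) (Real.rpow_nonneg (hAnn (n + 1)) (p - 1)))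
      hpq
    have hce : c ^ e * c ^ (-e) = 1 := by
      rw [← Real.rpow_add hc]; simp
    have h1 : a (n + 1) * c ^ e * (c ^ (-e) * A (n + 1) ^ (p - 1))
        = a (n + 1) * A (n + 1) ^ (p - 1) := by
      calc a (n + 1) * c ^ e * (c ^ (-e) * A (n + 1) ^ (p - 1))
          = (c ^ e * c ^ (-e)) * (a (n + 1) * A (n + 1) ^ (p - 1)) := by ring
        _ = a (n + 1) * A (n + 1) ^ (p - 1) := by rw [hce]; ring
    have h2 : (a (n + 1) * c ^ e) ^ p = c ^ (p - 1) * a (n + 1) ^ p := by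
      rw [Real.mul_rpow (ha (n + 1)) (Real.rpow_nonneg hc.le e),
        ← Real.rpow_mul hc.le, he, div_mul_cancel₀ _ hp0.ne']
      ring
    have h3 : (c ^ (-e) * A (n + 1) ^ (p - 1)) ^ q = c⁻¹ * A (n + 1) ^ p := by
      rw [Real.mul_rpow (Real.rpow_nonneg hc.le _) (Real.rpow_nonneg (hAnn (n + 1)) _),
        ← Real.rpow_mul hc.le, ← Real.rpow_mul (hAnn (n + 1)),
        hpq.sub_one_mul_conj,
        show -e * q = -1 by rw [he, hq_def]; field_simp,
        Real.rpow_neg_one]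
    rw [h1, h2, h3] at h
    have h4 : c⁻¹ * A (n + 1) ^ p / q = (p - 1) / (p * c) * A (n + 1) ^ p := by
      rw [hq_def]
      field_simp
    linarith
  -- combine for each N
  have hmain : ∀ N : ℕ,
      ∑ n ∈ Finset.range N, A (n + 1) ^ p ≤ c ^ p * ∑' n : ℕ, a (n + 1) ^ p := by
    intro N
    set S := ∑ n ∈ Finset.range N, A (n + 1) ^ p with hS
    set U := ∑ n ∈ Finset.range N, a (n + 1) ^ p with hU
    set B := ∑ n ∈ Finset.range N, a (n + 1) * A (n + 1) ^ (p - 1) with hB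
    have h1 : (p - L) * S ≤ p * B := sum1 N
    have h2 : B ≤ c ^ (p - 1) / p * U + (p - 1) / (p * c) * S := by
      rw [hS, hU, hB, Finset.mul_sum, Finset.mul_sum, ← Finset.sum_add_distrib]
      refine Finset.sum_le_sum fun n _ => ?_
      have := key2 n
      calc a (n + 1) * A (n + 1) ^ (p - 1)
          ≤ c ^ (p - 1) * a (n + 1) ^ p / p + (p - 1) / (p * c) * A (n + 1) ^ p := key2 n
        _ = c ^ (p - 1) / p * a (n + 1) ^ p + (p - 1) / (p * c) * A (n + 1) ^ p := by ring
    have hpc : p - L = p / c := by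
      rw [hc_def]; field_simp
    have h2' : p * B ≤ c ^ (p - 1) * U + (p - 1) / c * S := by
      have e : p * (c ^ (p - 1) / p * U + (p - 1) / (p * c) * S)
          = c ^ (p - 1) * U + (p - 1) / c * S := by
        field_simp
      nlinarith [mul_le_mul_of_nonneg_left h2 hp0.le]
    have h4 : (1 / c) * S ≤ c ^ (p - 1) * U := by
      rw [hpc] at h1
      have e1 : p / c * S = (1 / c) * S + (p - 1) / c * S := by ring
      linarith [e1 ▸ h1]
    have h5 : S ≤ c ^ p * U := by
      have := mul_le_mul_of_nonneg_left h4 hc.le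
      have e2 : c * ((1 / c) * S) = S := by field_simp
      have e3 : c * (c ^ (p - 1) * U) = c ^ p * U := by
        nth_rewrite 1 [← Real.rpow_one c]
        rw [← mul_assoc, ← Real.rpow_add hc, show (1:ℝ) + (p - 1) = p by ring]
      linarith [e2 ▸ e3 ▸ this]
    have hUT : U ≤ ∑' n : ℕ, a (n + 1) ^ p :=
      Summable.sum_le_tsum (Finset.range N)
        (fun i _ => Real.rpow_nonneg (ha (i + 1)) p) hsum
    calc S ≤ c ^ p * U := h5
      _ ≤ c ^ p * ∑' n : ℕ, a (n + 1) ^ p :=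
        mul_le_mul_of_nonneg_left hUT (Real.rpow_nonneg hc.le p)
  exact Real.tsum_le_of_sum_range_le (fun n => Real.rpow_nonneg (hAnn (n + 1)) p) hmain
end

section
/- Let (\lambda_n) be positive reals with \Lambda_n = \sum_{i=1}^n \lambda_i, and suppose M = \sup_n (\Lambda_n/\lambda_n) \log((\Lambda_{n+1}/\lambda_{n+1})/(\Lambda_n/\lambda_n)) < \infty. Then for any non-negative (a_n) with convergent sum, \sum_{n=1}^\infty \prod_{k=1}^n a_k^{\lambda_k/\Lambda_n} \le e^M \sum_{n=1}^\infty a_n. -/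
open Finset

/-- Corollary 1: weighted Carleman's inequality with constant `e^M`. -/
theorem weighted_carleman_log (M : ℝ)
    (lam Lam : ℕ → ℝ) (hlam : ∀ n, 0 < lam n)
    (hLam : ∀ n, Lam n = ∑ i ∈ Finset.Icc 1 n, lam i)
    (hbdd : BddAbove (Set.range fun n : ℕ =>
      (Lam (n + 1) / lam (n + 1)) *
        Real.log ((Lam (n + 2) / lam (n + 2)) / (Lam (n + 1) / lam (n + 1)))))
    (hMdef : M = ⨆ n : ℕ, (Lam (n + 1) / lam (n + 1)) *
      Real.log ((Lam (n + 2) / lam (n + 2)) / (Lam (n + 1) / lam (n + 1))))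
    (a : ℕ → ℝ) (ha : ∀ n, 0 ≤ a n)
    (hs : Summable fun n : ℕ => a (n + 1)) :
    ∑' n : ℕ, ∏ k ∈ Finset.Icc 1 (n + 1), a k ^ (lam k / Lam (n + 1)) ≤
      Real.exp M * ∑' n : ℕ, a (n + 1) := by
  -- basic facts about Lam
  have hΛpos : ∀ m, 1 ≤ m → 0 < Lam m := by
    intro m hm
    rw [hLam]
    exact Finset.sum_pos (fun i _ => hlam i) ⟨m, Finset.mem_Icc.mpr ⟨hm, le_rfl⟩⟩
  have hΛsucc : ∀ m, Lam (m + 1) = Lam m + lam (m + 1) := by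
    intro m
    rw [hLam, hLam, Finset.sum_Icc_succ_top (by omega : 1 ≤ m + 1)]
  -- the weight ratios
  set c : ℕ → ℝ := fun k => Lam k / lam k with hc
  have hcpos : ∀ k, 1 ≤ k → 0 < c k := fun k hk => div_pos (hΛpos k hk) (hlam k)
  have hclam : ∀ k, c k * lam k = Lam k := fun k =>
    div_mul_cancel₀ _ (hlam k).ne'
  -- bound on the sup terms
  have hM : ∀ k, 1 ≤ k → c k * Real.log (c (k + 1) / c k) ≤ M := by
    intro k hk
    obtain ⟨n, rfl⟩ : ∃ n, k = n + 1 := ⟨k - 1, by omega⟩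
    rw [hMdef]
    exact le_ciSup hbdd n
  -- the auxiliary weights μ
  set μ : ℕ → ℝ := fun k => c (k + 1) ^ c k * c k ^ (-(c k - 1)) with hμ
  have hμpos : ∀ k, 1 ≤ k → 0 < μ k := fun k hk =>
    mul_pos (Real.rpow_pos_of_pos (hcpos (k + 1) (by omega)) _)
      (Real.rpow_pos_of_pos (hcpos k hk) _)
  -- product identity : ∏_{k ≤ m} μ k ^ lam k = c (m+1) ^ Lam m
  have hprod : ∀ m, ∏ k ∈ Icc 1 m, μ k ^ lam k = c (m + 1) ^ Lam m := by
    intro m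
    induction m with
    | zero => simp [hLam]
    | succ m ih =>
      rw [Finset.prod_Icc_succ_top (by omega : 1 ≤ m + 1), ih]
      have h1 : (0:ℝ) ≤ c (m + 2) ^ c (m + 1) :=
        (Real.rpow_pos_of_pos (hcpos (m + 2) (by omega)) _).le
      have h2 : (0:ℝ) ≤ c (m + 1) ^ (-(c (m + 1) - 1)) :=
        (Real.rpow_pos_of_pos (hcpos (m + 1) (by omega)) _).le
      have hcm : 0 < c (m + 1) := hcpos (m + 1) (by omega)
      rw [hμ]
      simp only
      rw [Real.mul_rpow h1 h2, ← Real.rpow_mul (hcpos (m + 2) (by omega)).le,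
        ← Real.rpow_mul hcm.le]
      have e1 : c (m + 1) * lam (m + 1) = Lam (m + 1) := hclam (m + 1)
      have e2 : -(c (m + 1) - 1) * lam (m + 1) = -Lam m := by
        have h3 := hclam (m + 1)
        have h4 := hΛsucc m
        nlinarith [hlam (m + 1)]
      rw [e1, e2]
      rw [show c (m + 1) ^ Lam m * (c (m + 2) ^ Lam (m + 1) * c (m + 1) ^ (-Lam m))
            = c (m + 2) ^ Lam (m + 1) * (c (m + 1) ^ Lam m * c (m + 1) ^ (-Lam m)) by ring,
        ← Real.rpow_add hcm, add_neg_cancel, Real.rpow_zero, mul_one]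
  -- key per-row bound
  have hrow : ∀ m, 1 ≤ m →
      ∏ k ∈ Icc 1 m, a k ^ (lam k / Lam m) ≤
        ∑ k ∈ Icc 1 m, lam k * μ k * a k * (1 / Lam m - 1 / Lam (m + 1)) := by
    intro m hm
    have hΛm : 0 < Lam m := hΛpos m hm
    have hΛm1 : 0 < Lam (m + 1) := hΛpos (m + 1) (by omega)
    have hcm1 : 0 < c (m + 1) := hcpos (m + 1) (by omega)
    have hw' : ∑ k ∈ Icc 1 m, lam k / Lam m = 1 := by
      rw [← Finset.sum_div, ← hLam, div_self hΛm.ne']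
    have amgm := Real.geom_mean_le_arith_mean_weighted (Icc 1 m)
      (fun k => lam k / Lam m) (fun k => μ k * a k)
      (fun k _ => (div_pos (hlam k) hΛm).le) hw'
      (fun k hk => mul_nonneg (hμpos k (Finset.mem_Icc.mp hk).1).le (ha k))
    have hsplit : ∏ k ∈ Icc 1 m, (μ k * a k) ^ (lam k / Lam m)
        = c (m + 1) * ∏ k ∈ Icc 1 m, a k ^ (lam k / Lam m) := by
      have h5 : ∀ k ∈ Icc 1 m, (μ k * a k) ^ (lam k / Lam m)
          = μ k ^ (lam k / Lam m) * a k ^ (lam k / Lam m) := fun k hk =>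
        Real.mul_rpow (hμpos k (Finset.mem_Icc.mp hk).1).le (ha k)
      rw [Finset.prod_congr rfl h5, Finset.prod_mul_distrib]
      congr 1
      have h6 : ∀ k ∈ Icc 1 m, μ k ^ (lam k / Lam m) = (μ k ^ lam k) ^ (1 / Lam m) := by
        intro k hk
        rw [← Real.rpow_mul (hμpos k (Finset.mem_Icc.mp hk).1).le]
        ring_nf
      rw [Finset.prod_congr rfl h6,
        Real.finset_prod_rpow (Icc 1 m) (fun k => μ k ^ lam k) (fun k hk =>
          Real.rpow_nonneg (hμpos k (Finset.mem_Icc.mp hk).1).le _) (1 / Lam m),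
        hprod m, ← Real.rpow_mul hcm1.le, mul_one_div, div_self hΛm.ne',
        Real.rpow_one]
    have key : c (m + 1) * ∏ k ∈ Icc 1 m, a k ^ (lam k / Lam m)
        ≤ ∑ k ∈ Icc 1 m, lam k / Lam m * (μ k * a k) := by
      rw [← hsplit]; exact amgm
    have hd : 1 / Lam m - 1 / Lam (m + 1) = 1 / (Lam m * c (m + 1)) := by
      have h7 := hΛsucc m
      have h8 : 0 < Lam m + lam (m + 1) := by nlinarith [hlam (m + 1)]
      show 1 / Lam m - 1 / Lam (m + 1) = 1 / (Lam m * (Lam (m + 1) / lam (m + 1)))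
      rw [h7]
      rw [div_sub_div _ _ hΛm.ne' h8.ne', div_eq_div_iff
        (mul_pos hΛm h8).ne'
        (mul_pos hΛm (div_pos h8 (hlam (m + 1)))).ne']
      field_simp [(hlam (m + 1)).ne']
      ring
    have step : ∏ k ∈ Icc 1 m, a k ^ (lam k / Lam m)
        ≤ (∑ k ∈ Icc 1 m, lam k / Lam m * (μ k * a k)) / c (m + 1) := by
      rw [le_div_iff₀ hcm1, mul_comm]
      exact key
    refine step.trans_eq ?_
    rw [Finset.sum_div]
    refine Finset.sum_congr rfl fun k _ => ?_
    rw [hd]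
    field_simp
  -- nonnegativity of the left-hand terms
  have hT : ∀ n : ℕ, 0 ≤ ∏ k ∈ Icc 1 (n + 1), a k ^ (lam k / Lam (n + 1)) :=
    fun n => Finset.prod_nonneg fun k _ => Real.rpow_nonneg (ha k) _
  -- the constant bound
  have hexp : ∀ k, 1 ≤ k → lam k * μ k / Lam k ≤ Real.exp M := by
    intro k hk
    have hck : 0 < c k := hcpos k hk
    have hck1 : 0 < c (k + 1) := hcpos (k + 1) (by omega)
    have hid : lam k * μ k / Lam k = (c (k + 1) / c k) ^ c k := by
      rw [Real.div_rpow hck1.le hck.le, ← hclam k, mul_comm (c k) (lam k),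
        mul_div_mul_left _ _ (hlam k).ne', hμ]
      simp only
      rw [mul_div_assoc]
      have h2 : c k ^ (-(c k - 1)) / c k = (c k ^ c k)⁻¹ := by
        rw [show -(c k - 1) = -c k + 1 by ring, Real.rpow_add hck, Real.rpow_one,
          mul_div_cancel_right₀ _ hck.ne', Real.rpow_neg hck.le]
      rw [h2, div_eq_mul_inv]
    rw [hid, Real.rpow_def_of_pos (div_pos hck1 hck)]
    exact Real.exp_le_exp.mpr (by rw [mul_comm]; exact hM k hk)
  -- reindexing lemma
  have hre : ∀ (f : ℕ → ℝ) (N : ℕ), ∑ m ∈ Icc 1 N, f m = ∑ i ∈ range N, f (i + 1) := by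
    intro f N
    rw [← Finset.Ico_add_one_right_eq_Icc, Finset.sum_Ico_eq_sum_range]
    exact Finset.sum_congr rfl fun i _ => by rw [add_comm 1 i]
  -- main estimate for partial sums
  apply Real.tsum_le_of_sum_range_le hT
  intro N
  calc ∑ i ∈ range N, ∏ k ∈ Icc 1 (i + 1), a k ^ (lam k / Lam (i + 1))
      = ∑ m ∈ Icc 1 N, ∏ k ∈ Icc 1 m, a k ^ (lam k / Lam m) :=
        (hre (fun m => ∏ k ∈ Icc 1 m, a k ^ (lam k / Lam m)) N).symm
    _ ≤ ∑ m ∈ Icc 1 N, ∑ k ∈ Icc 1 m, lam k * μ k * a k * (1 / Lam m - 1 / Lam (m + 1)) :=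
        Finset.sum_le_sum fun m hm => hrow m (Finset.mem_Icc.mp hm).1
    _ = ∑ k ∈ Icc 1 N, ∑ m ∈ Icc k N, lam k * μ k * a k * (1 / Lam m - 1 / Lam (m + 1)) := by
        have h8 := Finset.sum_Ico_Ico_comm 1 (N + 1)
          (fun k m => lam k * μ k * a k * (1 / Lam m - 1 / Lam (m + 1)))
        simp only [Finset.Ico_add_one_right_eq_Icc] at h8
        exact h8.symm
    _ = ∑ k ∈ Icc 1 N, lam k * μ k * a k * (1 / Lam k - 1 / Lam (N + 1)) := by
        refine Finset.sum_congr rfl fun k hk => ?_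
        obtain ⟨hk1, hkN⟩ := Finset.mem_Icc.mp hk
        rw [← Finset.mul_sum]
        congr 1
        rw [← Finset.Ico_add_one_right_eq_Icc, Finset.sum_Ico_eq_sum_range]
        have h9 := Finset.sum_range_sub' (fun j => 1 / Lam (k + j)) (N + 1 - k)
        simp only [← add_assoc] at h9
        rw [h9]
        rw [show k + (N + 1 - k) = N + 1 by omega, add_zero]
    _ ≤ ∑ k ∈ Icc 1 N, Real.exp M * a k := by
        refine Finset.sum_le_sum fun k hk => ?_
        obtain ⟨hk1, _⟩ := Finset.mem_Icc.mp hk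
        have hnn : 0 ≤ lam k * μ k * a k :=
          mul_nonneg (mul_nonneg (hlam k).le (hμpos k hk1).le) (ha k)
        have h10 : lam k * μ k * a k * (1 / Lam k - 1 / Lam (N + 1))
            ≤ lam k * μ k * a k * (1 / Lam k) := by
          apply mul_le_mul_of_nonneg_left _ hnn
          have h11 : 0 ≤ 1 / Lam (N + 1) :=
            (one_div_pos.mpr (hΛpos (N + 1) (by omega))).le
          linarith
        refine h10.trans ?_
        rw [show lam k * μ k * a k * (1 / Lam k) = lam k * μ k / Lam k * a k by ring]
        exact mul_le_mul_of_nonneg_right (hexp k hk1) (ha k)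
    _ = Real.exp M * ∑ k ∈ Icc 1 N, a k := by rw [Finset.mul_sum]
    _ ≤ Real.exp M * ∑' n : ℕ, a (n + 1) := by
        apply mul_le_mul_of_nonneg_left _ (Real.exp_pos M).le
        rw [hre a N]
        exact Summable.sum_le_tsum (range N) (fun i _ => ha _) hs
end

section
/- Let (\lambda_n) be positive reals with \Lambda_n = \sum_{i=1}^n \lambda_i, and let E = \sup_n (\Lambda_{n+1}/\lambda_{n+1}) \prod_{k=1}^n (\lambda_k/\Lambda_k)^{\lambda_k/\Lambda_n}. Then for any non-negative (a_n) with convergent sum, \sum_{n=1}^\infty \prod_{k=1}^n a_k^{\lambda_k/\Lambda_n} \le E \sum_{n=1}^\infty a_n (Bennett's theorem). -/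
/-- Bennett's theorem on weighted Carleman's inequality. -/
theorem bennett_weighted_carleman (E : ℝ)
    (lam Lam : ℕ → ℝ) (hlam : ∀ n, 0 < lam n)
    (hLam : ∀ n, Lam n = ∑ i ∈ Finset.Icc 1 n, lam i)
    (hbdd : BddAbove (Set.range fun n : ℕ =>
      (Lam (n + 2) / lam (n + 2)) *
        ∏ k ∈ Finset.Icc 1 (n + 1), (lam k / Lam k) ^ (lam k / Lam (n + 1))))
    (hEdef : E = ⨆ n : ℕ, (Lam (n + 2) / lam (n + 2)) *
      ∏ k ∈ Finset.Icc 1 (n + 1), (lam k / Lam k) ^ (lam k / Lam (n + 1)))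
    (a : ℕ → ℝ) (ha : ∀ n, 0 ≤ a n)
    (hs : Summable fun n : ℕ => a (n + 1)) :
    ∑' n : ℕ, ∏ k ∈ Finset.Icc 1 (n + 1), a k ^ (lam k / Lam (n + 1)) ≤
      E * ∑' n : ℕ, a (n + 1) := by
  have hLpos : ∀ m : ℕ, 1 ≤ m → 0 < Lam m := by
    intro m hm
    rw [hLam]
    exact Finset.sum_pos (fun i _ => hlam i) (Finset.nonempty_Icc.2 hm)
  have hLsucc : ∀ m : ℕ, Lam (m + 1) = Lam m + lam (m + 1) := by
    intro m
    rw [hLam, hLam, Finset.sum_Icc_succ_top (Nat.le_add_left 1 m)]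
  set G : ℕ → ℝ := fun n => ∏ k ∈ Finset.Icc 1 (n + 1), a k ^ (lam k / Lam (n + 1)) with hG
  set S : ℕ → ℝ := fun m => ∑ k ∈ Finset.Icc 1 m, Lam k * a k with hS
  have hSnonneg : ∀ m, 0 ≤ S m := by
    intro m
    refine Finset.sum_nonneg fun k hk => ?_
    exact mul_nonneg (hLpos k (Finset.mem_Icc.1 hk).1).le (ha k)
  have hEb : ∀ n : ℕ, (Lam (n + 2) / lam (n + 2)) *
      ∏ k ∈ Finset.Icc 1 (n + 1), (lam k / Lam k) ^ (lam k / Lam (n + 1)) ≤ E := by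
    intro n; rw [hEdef]; exact le_ciSup hbdd n
  have hE0 : 0 ≤ E := by
    refine le_trans ?_ (hEb 0)
    have h2 : 0 < Lam 2 := hLpos 2 (by norm_num)
    refine mul_nonneg (div_nonneg h2.le (hlam 2).le) (Finset.prod_nonneg fun k hk => ?_)
    exact Real.rpow_nonneg (div_nonneg (hlam k).le (hLpos k (Finset.mem_Icc.1 hk).1).le) _
  -- key pointwise bound
  have key : ∀ n : ℕ, G n ≤ E * (1 / Lam (n + 1) - 1 / Lam (n + 2)) * S (n + 1) := by
    intro n
    have hm1 : 0 < Lam (n + 1) := hLpos (n + 1) (Nat.le_add_left 1 n)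
    have hm2 : 0 < Lam (n + 2) := hLpos (n + 2) (by omega)
    set w : ℕ → ℝ := fun k => lam k / Lam (n + 1) with hw
    have hwsum : ∑ k ∈ Finset.Icc 1 (n + 1), w k = 1 := by
      rw [hw, ← Finset.sum_div, ← hLam (n + 1), div_self hm1.ne']
    have hsplit : G n = (∏ k ∈ Finset.Icc 1 (n + 1), (lam k / Lam k) ^ w k) *
        ∏ k ∈ Finset.Icc 1 (n + 1), (Lam k * a k / lam k) ^ w k := by
      rw [hG, ← Finset.prod_mul_distrib]
      refine Finset.prod_congr rfl fun k hk => ?_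
      have hk1 : 0 < Lam k := hLpos k (Finset.mem_Icc.1 hk).1
      rw [← Real.mul_rpow (div_nonneg (hlam k).le hk1.le)
        (div_nonneg (mul_nonneg hk1.le (ha k)) (hlam k).le)]
      congr 1
      have h1 : lam k ≠ 0 := (hlam k).ne'
      have h2 : Lam k ≠ 0 := hk1.ne'
      field_simp
    have hamgm : ∏ k ∈ Finset.Icc 1 (n + 1), (Lam k * a k / lam k) ^ w k ≤
        S (n + 1) / Lam (n + 1) := by
      refine le_trans (Real.geom_mean_le_arith_mean_weighted _ w _
        (fun k _ => div_nonneg (hlam k).le hm1.le) hwsum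
        (fun k hk => div_nonneg (mul_nonneg (hLpos k (Finset.mem_Icc.1 hk).1).le (ha k))
          (hlam k).le)) (le_of_eq ?_)
      rw [hS, Finset.sum_div]
      refine Finset.sum_congr rfl fun k hk => ?_
      have h1 : lam k ≠ 0 := (hlam k).ne'
      have h2 : Lam (n + 1) ≠ 0 := hm1.ne'
      simp only [hw]
      field_simp
    have hP0 : 0 ≤ ∏ k ∈ Finset.Icc 1 (n + 1), (lam k / Lam k) ^ w k :=
      Finset.prod_nonneg fun k hk =>
        Real.rpow_nonneg (div_nonneg (hlam k).le (hLpos k (Finset.mem_Icc.1 hk).1).le) _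
    have hPle : ∏ k ∈ Finset.Icc 1 (n + 1), (lam k / Lam k) ^ w k ≤
        E * lam (n + 2) / Lam (n + 2) := by
      have h := hEb n
      have hpos : 0 < lam (n + 2) / Lam (n + 2) := div_pos (hlam (n + 2)) hm2
      calc ∏ k ∈ Finset.Icc 1 (n + 1), (lam k / Lam k) ^ w k
          = (lam (n + 2) / Lam (n + 2)) * ((Lam (n + 2) / lam (n + 2)) *
            ∏ k ∈ Finset.Icc 1 (n + 1), (lam k / Lam k) ^ w k) := by
            have h1 : lam (n + 2) ≠ 0 := (hlam (n + 2)).ne'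
            have h2 : Lam (n + 2) ≠ 0 := hm2.ne'
            field_simp
        _ ≤ (lam (n + 2) / Lam (n + 2)) * E := by
            exact mul_le_mul_of_nonneg_left h hpos.le
        _ = E * lam (n + 2) / Lam (n + 2) := by ring
    calc G n ≤ (∏ k ∈ Finset.Icc 1 (n + 1), (lam k / Lam k) ^ w k) * (S (n + 1) / Lam (n + 1)) := by
          rw [hsplit]; exact mul_le_mul_of_nonneg_left hamgm hP0
      _ ≤ (E * lam (n + 2) / Lam (n + 2)) * (S (n + 1) / Lam (n + 1)) :=
          mul_le_mul_of_nonneg_right hPle (div_nonneg (hSnonneg _) hm1.le)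
      _ = E * (1 / Lam (n + 1) - 1 / Lam (n + 2)) * S (n + 1) := by
          have h12 : lam (n + 2) = Lam (n + 2) - Lam (n + 1) := by
            have := hLsucc (n + 1); linarith
          have hdiff : 1 / Lam (n + 1) - 1 / Lam (n + 2) =
              lam (n + 2) / (Lam (n + 1) * Lam (n + 2)) := by
            rw [div_sub_div _ _ hm1.ne' hm2.ne', h12]
            ring_nf
          rw [hdiff]
          ring
  -- partial sums bound by induction
  have main : ∀ N : ℕ, ∑ n ∈ Finset.range N, G n ≤
      E * ((∑ k ∈ Finset.Icc 1 N, a k) - S N / Lam (N + 1)) := by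
    intro N
    induction N with
    | zero => simp [hS]
    | succ N ih =>
      have hm1 : 0 < Lam (N + 1) := hLpos (N + 1) (Nat.le_add_left 1 N)
      have hm2 : 0 < Lam (N + 2) := hLpos (N + 2) (by omega)
      rw [Finset.sum_range_succ]
      refine le_trans (add_le_add ih (key N)) (le_of_eq ?_)
      have hSrec : S (N + 1) = S N + Lam (N + 1) * a (N + 1) := by
        rw [hS]; exact Finset.sum_Icc_succ_top (Nat.le_add_left 1 N) _
      rw [Finset.sum_Icc_succ_top (Nat.le_add_left 1 N), hSrec]
      field_simp
      ring
  -- conclude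
  have hGpos : ∀ n, 0 ≤ G n := by
    intro n
    exact Finset.prod_nonneg fun k _ => Real.rpow_nonneg (ha k) _
  refine Real.tsum_le_of_sum_range_le hGpos fun N => ?_
  refine le_trans (main N) ?_
  have h1 : (∑ k ∈ Finset.Icc 1 N, a k) - S N / Lam (N + 1) ≤ ∑' n : ℕ, a (n + 1) := by
    have h2 : ∑ k ∈ Finset.Icc 1 N, a k = ∑ i ∈ Finset.range N, a (i + 1) := by
      rw [← Finset.Ico_add_one_right_eq_Icc, Finset.sum_Ico_eq_sum_range]
      simp [add_comm]
    have h3 : ∑ i ∈ Finset.range N, a (i + 1) ≤ ∑' n : ℕ, a (n + 1) :=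
      Summable.sum_le_tsum _ (fun i _ => ha _) hs
    have h4 : 0 ≤ S N / Lam (N + 1) :=
      div_nonneg (hSnonneg N) (hLpos (N + 1) (Nat.le_add_left 1 N)).le
    linarith [h2 ▸ h3]
  exact mul_le_mul_of_nonneg_left h1 hE0
end

section
/- Pečarić–Stolarsky inequality: Let (\lambda_n) be positive, \Lambda_n = \sum_{i=1}^n \lambda_i, (a_n) non-negative, (b_n) positive, and G_n = \prod_{k=1}^n a_k^{\lambda_k/\Lambda_n}. Then for every N \ge 1, \sum_{n=1}^N \Lambda_n (b_n - 1) G_n + \Lambda_N G_N \le \sum_{n=1}^N \lambda_n a_n b_n^{\Lambda_n/\lambda_n}. -/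
/-- The Pečarić–Stolarsky inequality. -/
theorem pecaric_stolarsky
    (lam Lam a b G : ℕ → ℝ) (hlam : ∀ n, 0 < lam n)
    (hLam : ∀ n, Lam n = ∑ i ∈ Finset.Icc 1 n, lam i)
    (ha : ∀ n, 0 ≤ a n) (hb : ∀ n, 0 < b n)
    (hG : ∀ n, G n = ∏ k ∈ Finset.Icc 1 n, a k ^ (lam k / Lam n))
    (N : ℕ) (hN : 1 ≤ N) :
    ∑ n ∈ Finset.Icc 1 N, Lam n * (b n - 1) * G n + Lam N * G N ≤
      ∑ n ∈ Finset.Icc 1 N, lam n * a n * b n ^ (Lam n / lam n) := by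
  have hLnn : ∀ m, 0 ≤ Lam m := fun m => by
    rw [hLam]; exact Finset.sum_nonneg fun i _ => (hlam i).le
  have hL0 : Lam 0 = 0 := by simp [hLam]
  have hLsucc : ∀ m, Lam (m + 1) = Lam m + lam (m + 1) := fun m => by
    rw [hLam, hLam, Finset.sum_Icc_succ_top (Nat.le_add_left 1 m)]
  have hLpos : ∀ m, 0 < Lam (m + 1) := fun m => by
    rw [hLsucc]; exact add_pos_of_nonneg_of_pos (hLnn m) (hlam (m+1))
  have hGnn : ∀ n, 0 ≤ G n := fun n => by
    rw [hG]; exact Finset.prod_nonneg fun k _ => Real.rpow_nonneg (ha k) _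
  have key : ∀ m : ℕ, Lam (m+1) * b (m+1) * G (m+1) ≤
      Lam m * G m + lam (m+1) * a (m+1) * b (m+1) ^ (Lam (m+1) / lam (m+1)) := by
    intro m
    have hLp := hLpos m
    have hlp := hlam (m+1)
    set w₁ := Lam m / Lam (m+1) with hw₁def
    set w₂ := lam (m+1) / Lam (m+1) with hw₂def
    set p₂ := a (m+1) * b (m+1) ^ (Lam (m+1) / lam (m+1)) with hp₂def
    have hw : w₁ + w₂ = 1 := by
      rw [hw₁def, hw₂def, ← add_div, ← hLsucc, div_self hLp.ne']
    have hw₁nn : 0 ≤ w₁ := div_nonneg (hLnn m) hLp.le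
    have hw₂nn : 0 ≤ w₂ := div_nonneg hlp.le hLp.le
    have hp₂nn : 0 ≤ p₂ := mul_nonneg (ha _) (Real.rpow_nonneg (hb _).le _)
    have hp2 : p₂ ^ w₂ = a (m+1) ^ w₂ * b (m+1) := by
      rw [hp₂def, Real.mul_rpow (ha _) (Real.rpow_nonneg (hb _).le _),
        ← Real.rpow_mul (hb _).le]
      have he : Lam (m+1) / lam (m+1) * w₂ = 1 := by
        rw [hw₂def]; field_simp
      rw [he, Real.rpow_one]
    have hp1 : G m ^ w₁ = ∏ k ∈ Finset.Icc 1 m, a k ^ (lam k / Lam (m+1)) := by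
      rcases Nat.eq_zero_or_pos m with hm | hm
      · subst hm; simp [hG, hw₁def, hL0]
      · have hLmpos : 0 < Lam m := by
          rw [hLam]
          exact Finset.sum_pos (fun i _ => hlam i) ⟨1, Finset.mem_Icc.mpr ⟨le_refl 1, hm⟩⟩
        rw [hG, ← Real.finset_prod_rpow _ _ (fun k _ => Real.rpow_nonneg (ha k) _)]
        refine Finset.prod_congr rfl fun k _ => ?_
        rw [← Real.rpow_mul (ha k)]
        congr 1
        rw [hw₁def]
        field_simp
      
    have hiden : G (m+1) * b (m+1) = G m ^ w₁ * p₂ ^ w₂ := by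
      rw [hp1, hp2, hG (m+1), Finset.prod_Icc_succ_top (Nat.le_add_left 1 m)]
      ring
    have hgm := Real.geom_mean_le_arith_mean2_weighted hw₁nn hw₂nn (hGnn m) hp₂nn hw
    have hle : G (m+1) * b (m+1) ≤ w₁ * G m + w₂ * p₂ := by rw [hiden]; exact hgm
    have hmul := mul_le_mul_of_nonneg_left hle hLp.le
    calc Lam (m+1) * b (m+1) * G (m+1) = Lam (m+1) * (G (m+1) * b (m+1)) := by ring
      _ ≤ Lam (m+1) * (w₁ * G m + w₂ * p₂) := hmul
      _ = (Lam (m+1) * w₁) * G m + (Lam (m+1) * w₂) * p₂ := by ring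
      _ = Lam m * G m + lam (m+1) * a (m+1) * b (m+1) ^ (Lam (m+1) / lam (m+1)) := by
          rw [hw₁def, hw₂def, mul_div_cancel₀ _ hLp.ne', mul_div_cancel₀ _ hLp.ne', hp₂def]
          ring
  have main : ∀ M : ℕ, ∑ n ∈ Finset.Icc 1 M, Lam n * (b n - 1) * G n + Lam M * G M ≤
      ∑ n ∈ Finset.Icc 1 M, lam n * a n * b n ^ (Lam n / lam n) := by
    intro M
    induction M with
    | zero => simp [hL0]
    | succ m ih =>
      rw [Finset.sum_Icc_succ_top (Nat.le_add_left 1 m),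
        Finset.sum_Icc_succ_top (Nat.le_add_left 1 m)]
      have hk := key m
      nlinarith [hk, ih]
  exact main N
end

section
/- Let (\lambda_n) be positive, \Lambda_n = \sum_{i=1}^n \lambda_i, (a_n) non-negative, (b_n) positive, G_n = \prod_{k=1}^n a_k^{\lambda_k/\Lambda_n}. Then for every N \ge 1, \sum_{n=1}^N \Lambda_n (b_n/\lambda_n - 1/\lambda_{n+1}) (\prod_{k=1}^n b_k^{-\Lambda_k/\Lambda_n}) G_n \le \sum_{n=1}^N a_n. -/
open Finset Real

/-- Inequality (5.2) of the paper. -/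
theorem ineq_5_2
    (lam Lam a b G : ℕ → ℝ) (hlam : ∀ n, 0 < lam n)
    (hLam : ∀ n, Lam n = ∑ i ∈ Finset.Icc 1 n, lam i)
    (ha : ∀ n, 0 ≤ a n) (hb : ∀ n, 0 < b n)
    (hG : ∀ n, G n = ∏ k ∈ Finset.Icc 1 n, a k ^ (lam k / Lam n))
    (N : ℕ) (hN : 1 ≤ N) :
    ∑ n ∈ Finset.Icc 1 N,
        Lam n * (b n / lam n - 1 / lam (n + 1)) *
          (∏ k ∈ Finset.Icc 1 n, b k ^ (-(Lam k / Lam n))) * G n ≤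
      ∑ n ∈ Finset.Icc 1 N, a n := by
  have hL0 : Lam 0 = 0 := by simp [hLam]
  have hLpos : ∀ n, 1 ≤ n → 0 < Lam n := by
    intro n hn
    rw [hLam]
    exact Finset.sum_pos (fun i _ => hlam i) ⟨1, by simp [hn]⟩
  have hLnn : ∀ n, 0 ≤ Lam n := by
    intro n
    cases n with
    | zero => simp [hL0]
    | succ m => exact (hLpos _ (Nat.succ_le_succ (Nat.zero_le _))).le
  have hLsucc : ∀ n, Lam (n + 1) = Lam n + lam (n + 1) := by
    intro n
    rw [hLam, hLam, Finset.sum_Icc_succ_top (Nat.succ_le_succ (Nat.zero_le _))]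
  set P : ℕ → ℝ := fun n => ∏ k ∈ Finset.Icc 1 n, (a k ^ lam k * b k ^ (-(Lam k))) with hP
  have hPnn : ∀ n, 0 ≤ P n := by
    intro n
    exact Finset.prod_nonneg fun k _ =>
      mul_nonneg (Real.rpow_nonneg (ha k) _) (Real.rpow_nonneg (hb k).le _)
  have hP0 : P 0 = 1 := by simp [hP]
  have hPsucc : ∀ n, P (n + 1) = P n * (a (n + 1) ^ lam (n + 1) * b (n + 1) ^ (-(Lam (n + 1)))) := by
    intro n
    simp only [hP]
    rw [Finset.prod_Icc_succ_top (Nat.succ_le_succ (Nat.zero_le _))]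
  set M : ℕ → ℝ := fun n => (∏ k ∈ Finset.Icc 1 n, b k ^ (-(Lam k / Lam n))) * G n with hM
  have hM0 : M 0 = 1 := by simp [hM, hG]
  have hMP : ∀ n, M n = P n ^ (Lam n)⁻¹ := by
    intro n
    cases n with
    | zero => rw [hM0, hP0, Real.one_rpow]
    | succ m =>
      simp only [hM, hG, hP]
      rw [← Finset.prod_mul_distrib]
      rw [← Real.finset_prod_rpow _ _ (fun k _ =>
        mul_nonneg (Real.rpow_nonneg (ha k) _) (Real.rpow_nonneg (hb k).le _)) _]
      refine Finset.prod_congr rfl fun k _ => ?_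
      rw [Real.mul_rpow (Real.rpow_nonneg (ha k) _) (Real.rpow_nonneg (hb k).le _),
        ← Real.rpow_mul (ha k), ← Real.rpow_mul (hb k).le,
        show lam k * (Lam (m + 1))⁻¹ = lam k / Lam (m + 1) from (div_eq_mul_inv _ _).symm,
        show -Lam k * (Lam (m + 1))⁻¹ = -(Lam k / Lam (m + 1)) by ring,
        mul_comm]
  have hMnn : ∀ n, 0 ≤ M n := fun n => (hMP n) ▸ Real.rpow_nonneg (hPnn n) _
  -- key pointwise inequality
  have key : ∀ n, Lam (n + 1) * b (n + 1) / lam (n + 1) * M (n + 1) ≤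
      a (n + 1) + Lam n / lam (n + 1) * M n := by
    intro n
    have hL1 : 0 < Lam (n + 1) := hLpos _ (Nat.succ_le_succ (Nat.zero_le _))
    have hPb : P n ^ (Lam (n + 1))⁻¹ = M n ^ (Lam n / Lam (n + 1)) := by
      cases n with
      | zero => rw [hP0, hM0, hL0, Real.one_rpow, zero_div, Real.rpow_zero]
      | succ m =>
        have hLm : 0 < Lam (m + 1) := hLpos _ (Nat.succ_le_succ (Nat.zero_le _))
        rw [hMP (m + 1), ← Real.rpow_mul (hPnn (m + 1))]
        congr 1
        field_simp
    have step1 : b (n + 1) * M (n + 1) =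
        a (n + 1) ^ (lam (n + 1) / Lam (n + 1)) * M n ^ (Lam n / Lam (n + 1)) := by
      have h1 : M (n + 1) = M n ^ (Lam n / Lam (n + 1)) *
          (a (n + 1) ^ (lam (n + 1) / Lam (n + 1)) * (b (n + 1))⁻¹) := by
        rw [hMP (n + 1), hPsucc n,
          Real.mul_rpow (hPnn n) (mul_nonneg (Real.rpow_nonneg (ha _) _)
            (Real.rpow_nonneg (hb _).le _)),
          Real.mul_rpow (Real.rpow_nonneg (ha _) _) (Real.rpow_nonneg (hb _).le _),
          ← Real.rpow_mul (ha _), ← Real.rpow_mul (hb _).le, hPb,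
          neg_mul, mul_inv_cancel₀ hL1.ne', Real.rpow_neg_one,
          show lam (n + 1) * (Lam (n + 1))⁻¹ = lam (n + 1) / Lam (n + 1) from
            (div_eq_mul_inv _ _).symm]
      rw [h1]
      have h2 : b (n + 1) * (M n ^ (Lam n / Lam (n + 1)) *
          (a (n + 1) ^ (lam (n + 1) / Lam (n + 1)) * (b (n + 1))⁻¹)) =
          (a (n + 1) ^ (lam (n + 1) / Lam (n + 1)) * M n ^ (Lam n / Lam (n + 1))) *
            (b (n + 1) * (b (n + 1))⁻¹) := by ring
      rw [h2, mul_inv_cancel₀ (hb _).ne', mul_one]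
    have h2 : a (n + 1) ^ (lam (n + 1) / Lam (n + 1)) * M n ^ (Lam n / Lam (n + 1)) ≤
        lam (n + 1) / Lam (n + 1) * a (n + 1) + Lam n / Lam (n + 1) * M n := by
      apply Real.geom_mean_le_arith_mean2_weighted
      · exact div_nonneg (hlam _).le hL1.le
      · exact div_nonneg (hLnn _) hL1.le
      · exact ha _
      · exact hMnn _
      · rw [← add_div, add_comm, ← hLsucc n, div_self hL1.ne']
    have h3 : b (n + 1) * M (n + 1) ≤
        lam (n + 1) / Lam (n + 1) * a (n + 1) + Lam n / Lam (n + 1) * M n := step1 ▸ h2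
    have hpos : 0 < Lam (n + 1) / lam (n + 1) := div_pos hL1 (hlam _)
    have h4 := mul_le_mul_of_nonneg_left h3 hpos.le
    have e1 : Lam (n + 1) / lam (n + 1) * (b (n + 1) * M (n + 1)) =
        Lam (n + 1) * b (n + 1) / lam (n + 1) * M (n + 1) := by ring
    have w1 : Lam (n + 1) / lam (n + 1) * (lam (n + 1) / Lam (n + 1)) = 1 := by
      rw [div_mul_div_comm, mul_comm, div_self (mul_ne_zero (hlam _).ne' hL1.ne')]
    have w2 : Lam (n + 1) / lam (n + 1) * (Lam n / Lam (n + 1)) = Lam n / lam (n + 1) := by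
      rw [div_mul_div_comm, mul_comm (lam (n + 1)) (Lam (n + 1)), mul_div_mul_left _ _ hL1.ne']
    have e2 : Lam (n + 1) / lam (n + 1) *
        (lam (n + 1) / Lam (n + 1) * a (n + 1) + Lam n / Lam (n + 1) * M n) =
        a (n + 1) + Lam n / lam (n + 1) * M n := by
      rw [mul_add, ← mul_assoc, ← mul_assoc, w1, w2, one_mul]
    rw [e1, e2] at h4
    exact h4
  -- telescoping sum
  set f : ℕ → ℝ := fun n => Lam n / lam (n + 1) * M n with hf
  have hf0 : f 0 = 0 := by simp [hf, hL0]
  have hfN : 0 ≤ f N := mul_nonneg (div_nonneg (hLnn _) (hlam _).le) (hMnn _)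
  have hsum1 : ∑ n ∈ Finset.Icc 1 N,
      Lam n * (b n / lam n - 1 / lam (n + 1)) *
        (∏ k ∈ Finset.Icc 1 n, b k ^ (-(Lam k / Lam n))) * G n =
      ∑ n ∈ Finset.Icc 1 N, (Lam n * b n / lam n * M n - f n) := by
    refine Finset.sum_congr rfl fun n _ => ?_
    simp only [hM, hf]
    ring
  rw [hsum1]
  have hsum2 : ∑ n ∈ Finset.Icc 1 N, (Lam n * b n / lam n * M n - f n) ≤
      ∑ n ∈ Finset.Icc 1 N, (a n + (f (n - 1) - f n)) := by
    refine Finset.sum_le_sum fun n hn => ?_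
    obtain ⟨m, rfl⟩ := Nat.exists_eq_add_of_le (Finset.mem_Icc.mp hn).1
    have h1 : 1 + m = m + 1 := Nat.add_comm 1 m
    rw [h1]
    simp only [Nat.add_sub_cancel]
    have hk := key m
    simp only [hf]
    linarith
  have hsum3 : ∑ n ∈ Finset.Icc 1 N, (a n + (f (n - 1) - f n)) =
      (∑ n ∈ Finset.Icc 1 N, a n) + (f 0 - f N) := by
    rw [Finset.sum_add_distrib]
    congr 1
    rw [← Finset.Ico_add_one_right_eq_Icc, Finset.sum_Ico_eq_sum_range]
    simp only [Nat.add_sub_cancel]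
    have he : ∀ i, f (1 + i - 1) - f (1 + i) = f i - f (i + 1) := by
      intro i
      congr 2 <;> omega
    rw [Finset.sum_congr rfl fun i _ => he i]
    exact Finset.sum_range_sub' f N
  calc ∑ n ∈ Finset.Icc 1 N, (Lam n * b n / lam n * M n - f n)
      ≤ ∑ n ∈ Finset.Icc 1 N, (a n + (f (n - 1) - f n)) := hsum2
    _ = (∑ n ∈ Finset.Icc 1 N, a n) + (f 0 - f N) := hsum3
    _ ≤ ∑ n ∈ Finset.Icc 1 N, a n := by rw [hf0]; linarith
end

section
/- Let (\lambda_n) be positive, \Lambda_n = \sum_{i=1}^n \lambda_i. For any M > 0, non-negative (a_n), and N \ge 1: \sum_{n=1}^N \Lambda_n (e^{M\lambda_n/\Lambda_n}/\lambda_n - 1/\lambda_{n+1}) G_n \le e^M \sum_{n=1}^N a_n, where G_n = \prod_{k=1}^n a_k^{\lambda_k/\Lambda_n}. -/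
open Finset

namespace Ineq52Aux

/-- `P n = ∑_{j=1}^n λ_j/Λ_j`. -/
noncomputable def P (lam Lam : ℕ → ℝ) (n : ℕ) : ℝ := ∑ j ∈ Finset.Icc 1 n, lam j / Lam j

/-- `b n = c_n a_n` with `c_n = e^{M(1+P_{n-1})}`. -/
noncomputable def b (M : ℝ) (lam Lam a : ℕ → ℝ) (n : ℕ) : ℝ :=
  Real.exp (M * (1 + P lam Lam (n - 1))) * a n

/-- `R n = Λ_n ∏_{k≤n} b_k^{λ_k/Λ_n}`. -/
noncomputable def R (M : ℝ) (lam Lam a : ℕ → ℝ) (n : ℕ) : ℝ :=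
  Lam n * ∏ k ∈ Finset.Icc 1 n, (b M lam Lam a k) ^ (lam k / Lam n)

/-- `T n = e^{-M(1+P_{n-1})}/λ_n`. -/
noncomputable def T (M : ℝ) (lam Lam : ℕ → ℝ) (n : ℕ) : ℝ :=
  Real.exp (-(M * (1 + P lam Lam (n - 1)))) / lam n

section

variable (M : ℝ) (lam Lam a : ℕ → ℝ) (hlam : ∀ n, 0 < lam n)
  (hLam : ∀ n, Lam n = ∑ i ∈ Finset.Icc 1 n, lam i) (ha : ∀ n, 0 ≤ a n)

include hlam hLam in
lemma Lam_pos {n : ℕ} (hn : 1 ≤ n) : 0 < Lam n := by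
  rw [hLam]
  exact Finset.sum_pos (fun i _ => hlam i) ⟨1, by simp [hn]⟩

include hlam hLam in
lemma Lam_nonneg (n : ℕ) : 0 ≤ Lam n := by
  rw [hLam]; exact Finset.sum_nonneg fun i _ => (hlam i).le

include hLam in
lemma Lam_succ (n : ℕ) : Lam (n + 1) = Lam n + lam (n + 1) := by
  rw [hLam, hLam, Finset.sum_Icc_succ_top (by omega)]

lemma P_succ (n : ℕ) : P lam Lam (n + 1) = P lam Lam n + lam (n + 1) / Lam (n + 1) := by
  rw [P, P, Finset.sum_Icc_succ_top (by omega)]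

include ha in
lemma b_nonneg (n : ℕ) : 0 ≤ b M lam Lam a n :=
  mul_nonneg (Real.exp_pos _).le (ha n)

include hlam hLam ha in
lemma R_nonneg (n : ℕ) : 0 ≤ R M lam Lam a n := by
  apply mul_nonneg (Lam_nonneg lam Lam hlam hLam n)
  exact Finset.prod_nonneg fun k _ => Real.rpow_nonneg (b_nonneg M lam Lam a ha k) _

include hlam in
lemma T_pos (n : ℕ) : 0 < T M lam Lam n :=
  div_pos (Real.exp_pos _) (hlam n)

include hlam in
lemma T_mul (n : ℕ) : T M lam Lam n * (lam n * b M lam Lam a n) = a n := by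
  rw [T, b, Real.exp_neg]
  field_simp [(hlam n).ne', (Real.exp_pos (M * (1 + P lam Lam (n - 1)))).ne']

include hlam hLam in
/-- Key combinatorial identity: `∑_{k≤n} λ_k (1+P_{k-1}) = Λ_n P_n`. -/
lemma sum_id (n : ℕ) :
    ∑ k ∈ Finset.Icc 1 n, lam k * (1 + P lam Lam (k - 1)) = Lam n * P lam Lam n := by
  induction n with
  | zero =>
      rw [hLam]
      simp [P]
  | succ m ih =>
      have hpos : (0:ℝ) < Lam m + lam (m + 1) := by
        have h1 := Lam_nonneg lam Lam hlam hLam m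
        have h2 := hlam (m + 1)
        linarith
      rw [Finset.sum_Icc_succ_top (by omega), ih, P_succ, Lam_succ lam Lam hLam]
      simp only [Nat.add_sub_cancel]
      field_simp [hpos.ne']
      ring

include hlam hLam in
/-- `∏_{k≤n} c_k^{λ_k/Λ_n} = e^{M P_n}`. -/
lemma prod_c (n : ℕ) (hn : 1 ≤ n) :
    ∏ k ∈ Finset.Icc 1 n, (Real.exp (M * (1 + P lam Lam (k - 1)))) ^ (lam k / Lam n)
      = Real.exp (M * P lam Lam n) := by
  have hLn : (0:ℝ) < Lam n := Lam_pos lam Lam hlam hLam hn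
  have h1 : ∀ k ∈ Finset.Icc 1 n,
      (Real.exp (M * (1 + P lam Lam (k - 1)))) ^ (lam k / Lam n)
        = Real.exp (M * (1 + P lam Lam (k - 1)) * (lam k / Lam n)) := by
    intro k _
    rw [← Real.exp_mul]
  rw [Finset.prod_congr rfl h1, ← Real.exp_sum]
  congr 1
  have h2 : ∑ k ∈ Finset.Icc 1 n, M * (1 + P lam Lam (k - 1)) * (lam k / Lam n)
      = (M / Lam n) * ∑ k ∈ Finset.Icc 1 n, lam k * (1 + P lam Lam (k - 1)) := by
    rw [Finset.mul_sum]
    exact Finset.sum_congr rfl fun k _ => by ring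
  rw [h2, sum_id lam Lam hlam hLam n]
  field_simp

include hlam hLam ha in
/-- `R n = Λ_n G_n e^{M P_n}`. -/
lemma R_eq (n : ℕ) (hn : 1 ≤ n) :
    R M lam Lam a n
      = Lam n * (∏ k ∈ Finset.Icc 1 n, a k ^ (lam k / Lam n)) * Real.exp (M * P lam Lam n) := by
  rw [R]
  have h1 : ∀ k ∈ Finset.Icc 1 n, (b M lam Lam a k) ^ (lam k / Lam n)
      = (Real.exp (M * (1 + P lam Lam (k - 1)))) ^ (lam k / Lam n) * a k ^ (lam k / Lam n) := by
    intro k _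
    rw [b, Real.mul_rpow (Real.exp_pos _).le (ha k)]
  rw [Finset.prod_congr rfl h1, Finset.prod_mul_distrib,
    prod_c M lam Lam hlam hLam n hn]
  ring

include hlam hLam ha in
/-- Per-term identity: the summand equals `e^M (T_n - T_{n+1}) R_n`. -/
lemma term_id (n : ℕ) (hn : 1 ≤ n) :
    Lam n * (Real.exp (M * lam n / Lam n) / lam n - 1 / lam (n + 1)) *
        (∏ k ∈ Finset.Icc 1 n, a k ^ (lam k / Lam n))
      = Real.exp M * (T M lam Lam n - T M lam Lam (n + 1)) * R M lam Lam a n := by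
  obtain ⟨m, rfl⟩ : ∃ m, n = m + 1 := ⟨n - 1, by omega⟩
  have hPn : P lam Lam (m + 1) = P lam Lam m + lam (m + 1) / Lam (m + 1) :=
    P_succ lam Lam m
  rw [R_eq M lam Lam a hlam hLam ha (m + 1) hn, T, T]
  simp only [Nat.add_sub_cancel]
  have h1 : Real.exp M * Real.exp (-(M * (1 + P lam Lam m))) *
      Real.exp (M * P lam Lam (m + 1)) = Real.exp (M * lam (m + 1) / Lam (m + 1)) := by
    rw [← Real.exp_add, ← Real.exp_add]
    congr 1
    rw [hPn]
    ring
  have h2 : Real.exp M * Real.exp (-(M * (1 + P lam Lam (m + 1)))) *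
      Real.exp (M * P lam Lam (m + 1)) = 1 := by
    rw [← Real.exp_add, ← Real.exp_add,
      show M + -(M * (1 + P lam Lam (m + 1))) + M * P lam Lam (m + 1) = 0 by ring,
      Real.exp_zero]
  linear_combination
    (-(Lam (m + 1) * (∏ k ∈ Finset.Icc 1 (m + 1), a k ^ (lam k / Lam (m + 1)))) / lam (m + 1)) * h1
    + (Lam (m + 1) * (∏ k ∈ Finset.Icc 1 (m + 1), a k ^ (lam k / Lam (m + 1))) / lam (m + 1 + 1)) * h2

include hlam hLam ha in
/-- AM-GM step: `R_{m+1} ≤ R_m + λ_{m+1} b_{m+1}` for `m ≥ 1`. -/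
lemma R_step (m : ℕ) (hm : 1 ≤ m) :
    R M lam Lam a (m + 1) ≤ R M lam Lam a m + lam (m + 1) * b M lam Lam a (m + 1) := by
  have hLm : (0:ℝ) < Lam m := Lam_pos lam Lam hlam hLam hm
  have hLm1 : (0:ℝ) < Lam (m + 1) := Lam_pos lam Lam hlam hLam (by omega)
  set Q : ℝ := ∏ k ∈ Finset.Icc 1 m, (b M lam Lam a k) ^ (lam k / Lam m) with hQ
  have hQ0 : 0 ≤ Q :=
    Finset.prod_nonneg fun k _ => Real.rpow_nonneg (b_nonneg M lam Lam a ha k) _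
  have hsplit : R M lam Lam a (m + 1)
      = Lam (m + 1) * (Q ^ (Lam m / Lam (m + 1)) *
          (b M lam Lam a (m + 1)) ^ (lam (m + 1) / Lam (m + 1))) := by
    rw [R, Finset.prod_Icc_succ_top (by omega)]
    have h1 : ∀ k ∈ Finset.Icc 1 m, (b M lam Lam a k) ^ (lam k / Lam (m + 1))
        = ((b M lam Lam a k) ^ (lam k / Lam m)) ^ (Lam m / Lam (m + 1)) := by
      intro k _
      rw [← Real.rpow_mul (b_nonneg M lam Lam a ha k)]
      congr 1
      field_simp
    rw [Finset.prod_congr rfl h1,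
      Real.finset_prod_rpow _ _ (fun k _ => Real.rpow_nonneg (b_nonneg M lam Lam a ha k) _)]
  have hw : Lam m / Lam (m + 1) + lam (m + 1) / Lam (m + 1) = 1 := by
    rw [← add_div, ← Lam_succ lam Lam hLam, div_self hLm1.ne']
  have hamgm := Real.geom_mean_le_arith_mean2_weighted
    (div_nonneg hLm.le hLm1.le) (div_nonneg (hlam (m+1)).le hLm1.le)
    hQ0 (b_nonneg M lam Lam a ha (m + 1)) hw
  have hmain : R M lam Lam a (m + 1)
      ≤ Lam (m + 1) * (Lam m / Lam (m + 1) * Q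
          + lam (m + 1) / Lam (m + 1) * b M lam Lam a (m + 1)) := by
    rw [hsplit]
    exact mul_le_mul_of_nonneg_left hamgm hLm1.le
  refine hmain.trans_eq ?_
  rw [R, ← hQ]
  field_simp

include hlam hLam ha in
/-- Main Abel-summation induction. -/
lemma main : ∀ N, 1 ≤ N →
    ∑ n ∈ Finset.Icc 1 N, Real.exp M * (T M lam Lam n - T M lam Lam (n + 1)) * R M lam Lam a n
      ≤ Real.exp M * (∑ n ∈ Finset.Icc 1 N, a n)
        - Real.exp M * (T M lam Lam (N + 1) * R M lam Lam a N) := by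
  intro N
  induction N with
  | zero => omega
  | succ m ih =>
      intro _
      rcases Nat.lt_or_ge m 1 with h | hm1
      · -- base case N = 1
        have hm0 : m = 0 := by omega
        subst hm0
        have hR1 : R M lam Lam a 1 = lam 1 * b M lam Lam a 1 := by
          rw [R]
          have h1 : Lam 1 = lam 1 := by rw [hLam]; simp
          rw [Finset.Icc_self, Finset.prod_singleton, h1, div_self (hlam 1).ne',
            Real.rpow_one]
        have hT1 : T M lam Lam 1 * (lam 1 * b M lam Lam a 1) = a 1 :=
          T_mul M lam Lam a hlam 1
        simp only [Finset.Icc_self, Finset.sum_singleton]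
        have hkey : Real.exp M * (T M lam Lam 1 - T M lam Lam 2) * R M lam Lam a 1
            = Real.exp M * a 1 - Real.exp M * (T M lam Lam 2 * R M lam Lam a 1) := by
          rw [hR1, ← hT1]
          ring
        rw [hkey]
      · -- inductive step: m ≥ 1
        have IH := ih hm1
        rw [Finset.sum_Icc_succ_top (by omega : 1 ≤ m + 1),
          Finset.sum_Icc_succ_top (by omega : 1 ≤ m + 1)]
        have hstep := R_step M lam Lam a hlam hLam ha m hm1
        have hTpos := T_pos M lam Lam hlam (m + 1)
        have hTb := T_mul M lam Lam a hlam (m + 1)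
        have key : T M lam Lam (m + 1) * R M lam Lam a (m + 1)
            ≤ T M lam Lam (m + 1) * R M lam Lam a m + a (m + 1) := by
          have h := mul_le_mul_of_nonneg_left hstep hTpos.le
          nlinarith [h, hTb]
        have hexp : (0:ℝ) < Real.exp M := Real.exp_pos M
        nlinarith [IH, mul_le_mul_of_nonneg_left key hexp.le]

end

end Ineq52Aux

/-- Inequality (5.2') of the paper. -/
theorem ineq_5_2' (M : ℝ) (hM : 0 < M)
    (lam Lam a G : ℕ → ℝ) (hlam : ∀ n, 0 < lam n)
    (hLam : ∀ n, Lam n = ∑ i ∈ Finset.Icc 1 n, lam i)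
    (ha : ∀ n, 0 ≤ a n)
    (hG : ∀ n, G n = ∏ k ∈ Finset.Icc 1 n, a k ^ (lam k / Lam n))
    (N : ℕ) (hN : 1 ≤ N) :
    ∑ n ∈ Finset.Icc 1 N,
        Lam n * (Real.exp (M * lam n / Lam n) / lam n - 1 / lam (n + 1)) * G n ≤
      Real.exp M * ∑ n ∈ Finset.Icc 1 N, a n := by
  have hsum : ∑ n ∈ Finset.Icc 1 N,
      Lam n * (Real.exp (M * lam n / Lam n) / lam n - 1 / lam (n + 1)) * G n
      = ∑ n ∈ Finset.Icc 1 N, Real.exp M *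
          (Ineq52Aux.T M lam Lam n - Ineq52Aux.T M lam Lam (n + 1)) * Ineq52Aux.R M lam Lam a n := by
    refine Finset.sum_congr rfl fun n hn => ?_
    have hn1 : 1 ≤ n := (Finset.mem_Icc.mp hn).1
    rw [hG n]
    exact Ineq52Aux.term_id M lam Lam a hlam hLam ha n hn1
  rw [hsum]
  have hmain := Ineq52Aux.main M lam Lam a hlam hLam ha N hN
  have hpos : 0 ≤ Real.exp M * (Ineq52Aux.T M lam Lam (N + 1) * Ineq52Aux.R M lam Lam a N) := by
    have h1 := Ineq52Aux.T_pos M lam Lam hlam (N + 1)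
    have h2 := Ineq52Aux.R_nonneg M lam Lam a hlam hLam ha N
    positivity
  linarith
end

section
/- Let (\lambda_n) be positive, \Lambda_n = \sum_{i=1}^n \lambda_i. Suppose M = \sup_n \sum_{k=1}^n (\lambda_k/\Lambda_n)(\Lambda_{k+1}/\lambda_{k+1} - \Lambda_k/\lambda_k) < \infty. Then for any non-negative (a_n) with convergent sum, \sum_{n=1}^\infty \prod_{k=1}^n a_k^{\lambda_k/\Lambda_n} \le e^M \sum_{n=1}^\infty a_n. -/
open Finset

private lemma tele_sum (g : ℕ → ℝ) : ∀ (N k : ℕ), k ≤ N + 1 →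
    ∑ m ∈ Finset.Icc k N, (g m - g (m + 1)) = g k - g (N + 1) := by
  intro N
  induction N with
  | zero =>
    intro k hk
    interval_cases k <;> simp
  | succ N ih =>
    intro k hk
    rcases Nat.lt_or_ge k (N + 2) with h | h
    · have hk' : k ≤ N + 1 := by omega
      rw [Finset.sum_Icc_succ_top hk', ih k hk']
      ring
    · have : k = N + 2 := by omega
      subst this
      simp

/-- Corollary 2: weighted Carleman's inequality with constant `e^M`. -/
theorem weighted_carleman_sum (M : ℝ)
    (lam Lam : ℕ → ℝ) (hlam : ∀ n, 0 < lam n)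
    (hLam : ∀ n, Lam n = ∑ i ∈ Finset.Icc 1 n, lam i)
    (hbdd : BddAbove (Set.range fun n : ℕ =>
      ∑ k ∈ Finset.Icc 1 (n + 1),
        (lam k / Lam (n + 1)) * (Lam (k + 1) / lam (k + 1) - Lam k / lam k)))
    (hMdef : M = ⨆ n : ℕ, ∑ k ∈ Finset.Icc 1 (n + 1),
      (lam k / Lam (n + 1)) * (Lam (k + 1) / lam (k + 1) - Lam k / lam k))
    (a : ℕ → ℝ) (ha : ∀ n, 0 ≤ a n)
    (hs : Summable fun n : ℕ => a (n + 1)) :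
    ∑' n : ℕ, ∏ k ∈ Finset.Icc 1 (n + 1), a k ^ (lam k / Lam (n + 1)) ≤
      Real.exp M * ∑' n : ℕ, a (n + 1) := by
  have hΛpos : ∀ m, 1 ≤ m → 0 < Lam m := by
    intro m hm
    rw [hLam]
    exact Finset.sum_pos (fun i _ => hlam i) (Finset.nonempty_Icc.mpr hm)
  have hΛsucc : ∀ m, Lam (m + 1) = Lam m + lam (m + 1) := by
    intro m
    rw [hLam, hLam, Finset.sum_Icc_succ_top (by omega : 1 ≤ m + 1)]
  set μ : ℕ → ℝ := fun k => Lam k / lam k with hμdef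
  have hμ : ∀ k, μ k = Lam k / lam k := fun k => rfl
  have hμpos : ∀ k, 1 ≤ k → 0 < μ k := fun k hk => div_pos (hΛpos k hk) (hlam k)
  have hM : ∀ m, 1 ≤ m →
      ∑ k ∈ Finset.Icc 1 m, (lam k / Lam m) * (μ (k + 1) - μ k) ≤ M := by
    intro m hm
    obtain ⟨n, rfl⟩ : ∃ n, m = n + 1 := ⟨m - 1, by omega⟩
    rw [hMdef]
    simp only [hμ]
    exact le_ciSup hbdd n
  -- the key pointwise bound
  have key : ∀ m, 1 ≤ m →
      ∏ k ∈ Finset.Icc 1 m, a k ^ (lam k / Lam m) ≤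
        Real.exp M * (((Lam m)⁻¹ - (Lam (m + 1))⁻¹) * ∑ k ∈ Finset.Icc 1 m, Lam k * a k) := by
    intro m hm
    have hΛm : 0 < Lam m := hΛpos m hm
    have hΛm1 : 0 < Lam (m + 1) := hΛpos (m + 1) (by omega)
    have hwsum : ∑ k ∈ Finset.Icc 1 m, lam k / Lam m = 1 := by
      rw [← Finset.sum_div, ← hLam, div_self hΛm.ne']
    -- AM-GM
    have amgm : ∏ k ∈ Finset.Icc 1 m, (μ k * a k) ^ (lam k / Lam m) ≤
        (Lam m)⁻¹ * ∑ k ∈ Finset.Icc 1 m, Lam k * a k := by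
      have h := Real.geom_mean_le_arith_mean_weighted (Finset.Icc 1 m)
        (fun k => lam k / Lam m) (fun k => μ k * a k)
        (fun k _ => div_nonneg (hlam k).le hΛm.le) hwsum
        (fun k hk => mul_nonneg (hμpos k (Finset.mem_Icc.mp hk).1).le (ha k))
      refine h.trans_eq ?_
      rw [Finset.mul_sum]
      refine Finset.sum_congr rfl fun k hk => ?_
      have hlk := (hlam k).ne'
      simp only [hμ]
      field_simp
      try ring
    have hsplit : ∏ k ∈ Finset.Icc 1 m, (μ k * a k) ^ (lam k / Lam m) =
        (∏ k ∈ Finset.Icc 1 m, (μ k) ^ (lam k / Lam m)) *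
          ∏ k ∈ Finset.Icc 1 m, a k ^ (lam k / Lam m) := by
      rw [← Finset.prod_mul_distrib]
      refine Finset.prod_congr rfl fun k hk => ?_
      exact Real.mul_rpow (hμpos k (Finset.mem_Icc.mp hk).1).le (ha k)
    -- lower bound on the product of μ's
    have hQ : Real.exp (-M) * μ (m + 1) ≤
        ∏ k ∈ Finset.Icc 1 m, (μ k) ^ (lam k / Lam m) := by
      have hQexp : ∏ k ∈ Finset.Icc 1 m, (μ k) ^ (lam k / Lam m) =
          Real.exp (∑ k ∈ Finset.Icc 1 m, (lam k / Lam m) * Real.log (μ k)) := by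
        rw [Real.exp_sum]
        refine Finset.prod_congr rfl fun k hk => ?_
        rw [Real.rpow_def_of_pos (hμpos k (Finset.mem_Icc.mp hk).1), mul_comm]
      rw [hQexp, ← Real.exp_log (hμpos (m + 1) (by omega)), ← Real.exp_add]
      apply Real.exp_le_exp.mpr
      -- need: -M + log μ(m+1) ≤ ∑ w_k log μ_k
      have hkey : ∑ k ∈ Finset.Icc 1 m, lam k * (Real.log (μ (m + 1)) - Real.log (μ k)) ≤
          M * Lam m := by
        have tele : ∀ k ∈ Finset.Icc 1 m,
            lam k * (Real.log (μ (m + 1)) - Real.log (μ k)) =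
            ∑ j ∈ Finset.Icc k m, lam k * (Real.log (μ (j + 1)) - Real.log (μ j)) := by
          intro k hk
          have hk2 := (Finset.mem_Icc.mp hk).2
          have ht := tele_sum (fun j => -Real.log (μ j)) m k (by omega)
          rw [← Finset.mul_sum]
          congr 1
          calc Real.log (μ (m + 1)) - Real.log (μ k)
              = -Real.log (μ k) - -Real.log (μ (m + 1)) := by ring
            _ = ∑ j ∈ Finset.Icc k m, (-Real.log (μ j) - -Real.log (μ (j + 1))) := ht.symm
            _ = ∑ j ∈ Finset.Icc k m, (Real.log (μ (j + 1)) - Real.log (μ j)) :=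
                Finset.sum_congr rfl fun j _ => by ring
        calc ∑ k ∈ Finset.Icc 1 m, lam k * (Real.log (μ (m + 1)) - Real.log (μ k))
            = ∑ k ∈ Finset.Icc 1 m, ∑ j ∈ Finset.Icc k m,
                lam k * (Real.log (μ (j + 1)) - Real.log (μ j)) :=
              Finset.sum_congr rfl tele
          _ = ∑ j ∈ Finset.Icc 1 m, ∑ k ∈ Finset.Icc 1 j,
                lam k * (Real.log (μ (j + 1)) - Real.log (μ j)) := by
              refine Finset.sum_comm' fun k j => ?_
              simp only [Finset.mem_Icc]
              omega
          _ = ∑ j ∈ Finset.Icc 1 m, Lam j * (Real.log (μ (j + 1)) - Real.log (μ j)) := by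
              refine Finset.sum_congr rfl fun j _ => ?_
              rw [← Finset.sum_mul, ← hLam]
          _ ≤ ∑ j ∈ Finset.Icc 1 m, lam j * (μ (j + 1) - μ j) := by
              refine Finset.sum_le_sum fun j hj => ?_
              have hj1 := (Finset.mem_Icc.mp hj).1
              have hμj : 0 < μ j := hμpos j hj1
              have hμj1 : 0 < μ (j + 1) := hμpos (j + 1) (by omega)
              have hlog : Real.log (μ (j + 1)) - Real.log (μ j) ≤ μ (j + 1) / μ j - 1 := by
                rw [← Real.log_div hμj1.ne' hμj.ne']
                exact Real.log_le_sub_one_of_pos (div_pos hμj1 hμj)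
              have hΛj : 0 < Lam j := hΛpos j hj1
              have h1 : Lam j * (Real.log (μ (j + 1)) - Real.log (μ j)) ≤
                  Lam j * (μ (j + 1) / μ j - 1) :=
                mul_le_mul_of_nonneg_left hlog hΛj.le
              refine h1.trans_eq ?_
              have hlj := (hlam j).ne'
              have hlj1 := (hlam (j + 1)).ne'
              have hΛj' := hΛj.ne'
              simp only [hμ]
              field_simp
              try ring
          _ ≤ M * Lam m := by
              have h2 : ∑ j ∈ Finset.Icc 1 m, lam j * (μ (j + 1) - μ j) =
                  (∑ k ∈ Finset.Icc 1 m, (lam k / Lam m) * (μ (k + 1) - μ k)) * Lam m := by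
                rw [Finset.sum_mul]
                refine Finset.sum_congr rfl fun k _ => ?_
                have := hΛm.ne'
                field_simp
              rw [h2]
              exact mul_le_mul_of_nonneg_right (hM m hm) hΛm.le
      have e1 : ∑ k ∈ Finset.Icc 1 m, lam k * (Real.log (μ (m + 1)) - Real.log (μ k)) =
          Lam m * Real.log (μ (m + 1)) - ∑ k ∈ Finset.Icc 1 m, lam k * Real.log (μ k) := by
        simp only [mul_sub]
        rw [Finset.sum_sub_distrib, ← Finset.sum_mul, ← hLam]
      have e2 : ∑ k ∈ Finset.Icc 1 m, (lam k / Lam m) * Real.log (μ k) =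
          (∑ k ∈ Finset.Icc 1 m, lam k * Real.log (μ k)) / Lam m := by
        rw [Finset.sum_div]
        exact Finset.sum_congr rfl fun k _ => by ring
      rw [e2]
      rw [e1] at hkey
      have h4 : Real.log (μ (m + 1)) - M ≤
          (∑ k ∈ Finset.Icc 1 m, lam k * Real.log (μ k)) / Lam m := by
        rw [le_div_iff₀ hΛm]
        have h5 : (Real.log (μ (m + 1)) - M) * Lam m =
            Lam m * Real.log (μ (m + 1)) - M * Lam m := by ring
        rw [h5]
        linarith [hkey]
      linarith [h4]
    -- combine
    have hGnn : 0 ≤ ∏ k ∈ Finset.Icc 1 m, a k ^ (lam k / Lam m) :=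
      Finset.prod_nonneg fun k _ => Real.rpow_nonneg (ha k) _
    have hμm1 : 0 < μ (m + 1) := hμpos (m + 1) (by omega)
    have hE : (0:ℝ) < Real.exp (-M) * μ (m + 1) := mul_pos (Real.exp_pos _) hμm1
    have step1 : (Real.exp (-M) * μ (m + 1)) * ∏ k ∈ Finset.Icc 1 m, a k ^ (lam k / Lam m)
        ≤ (Lam m)⁻¹ * ∑ k ∈ Finset.Icc 1 m, Lam k * a k := by
      calc (Real.exp (-M) * μ (m + 1)) * ∏ k ∈ Finset.Icc 1 m, a k ^ (lam k / Lam m)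
          ≤ (∏ k ∈ Finset.Icc 1 m, (μ k) ^ (lam k / Lam m)) *
              ∏ k ∈ Finset.Icc 1 m, a k ^ (lam k / Lam m) :=
            mul_le_mul_of_nonneg_right hQ hGnn
        _ = ∏ k ∈ Finset.Icc 1 m, (μ k * a k) ^ (lam k / Lam m) := hsplit.symm
        _ ≤ _ := amgm
    have hc : Real.exp M * ((Lam m)⁻¹ - (Lam (m + 1))⁻¹) =
        (Real.exp (-M) * μ (m + 1))⁻¹ * (Lam m)⁻¹ := by
      have hd : (Lam m)⁻¹ - (Lam (m + 1))⁻¹ = lam (m + 1) / (Lam m * Lam (m + 1)) := by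
        rw [hΛsucc m]
        have h1 := (hΛpos m hm).ne'
        have h2 : Lam m + lam (m + 1) ≠ 0 :=
          (by linarith [hlam (m + 1)] : (0:ℝ) < Lam m + lam (m + 1)).ne'
        field_simp
        try ring
      rw [hd, hμ, Real.exp_neg]
      have hl := (hlam (m + 1)).ne'
      have h1 := hΛm.ne'
      have h2 := hΛm1.ne'
      have h3 := (Real.exp_pos M).ne'
      field_simp
      try ring
    calc ∏ k ∈ Finset.Icc 1 m, a k ^ (lam k / Lam m)
        = (Real.exp (-M) * μ (m + 1))⁻¹ *
            ((Real.exp (-M) * μ (m + 1)) * ∏ k ∈ Finset.Icc 1 m, a k ^ (lam k / Lam m)) := by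
          rw [← mul_assoc, inv_mul_cancel₀ hE.ne', one_mul]
      _ ≤ (Real.exp (-M) * μ (m + 1))⁻¹ *
            ((Lam m)⁻¹ * ∑ k ∈ Finset.Icc 1 m, Lam k * a k) :=
          mul_le_mul_of_nonneg_left step1 (inv_nonneg.mpr hE.le)
      _ = Real.exp M * (((Lam m)⁻¹ - (Lam (m + 1))⁻¹) * ∑ k ∈ Finset.Icc 1 m, Lam k * a k) := by
          rw [← mul_assoc, ← hc, mul_assoc]
  -- assemble
  have hfnn : ∀ n : ℕ, 0 ≤ ∏ k ∈ Finset.Icc 1 (n + 1), a k ^ (lam k / Lam (n + 1)) :=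
    fun n => Finset.prod_nonneg fun k _ => Real.rpow_nonneg (ha k) _
  apply Real.tsum_le_of_sum_range_le hfnn
  intro N
  have reindex : ∀ (K : ℕ) (f : ℕ → ℝ),
      ∑ n ∈ Finset.range K, f (n + 1) = ∑ m ∈ Finset.Icc 1 K, f m := by
    intro K f
    induction K with
    | zero => simp
    | succ K ih =>
      rw [Finset.sum_range_succ, Finset.sum_Icc_succ_top (by omega : 1 ≤ K + 1), ih]
  rw [reindex N (fun m => ∏ k ∈ Finset.Icc 1 m, a k ^ (lam k / Lam m))]
  calc ∑ m ∈ Finset.Icc 1 N, ∏ k ∈ Finset.Icc 1 m, a k ^ (lam k / Lam m)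
      ≤ ∑ m ∈ Finset.Icc 1 N, Real.exp M *
          (((Lam m)⁻¹ - (Lam (m + 1))⁻¹) * ∑ k ∈ Finset.Icc 1 m, Lam k * a k) :=
        Finset.sum_le_sum fun m hm => key m (Finset.mem_Icc.mp hm).1
    _ = Real.exp M * ∑ m ∈ Finset.Icc 1 N, ∑ k ∈ Finset.Icc 1 m,
          ((Lam m)⁻¹ - (Lam (m + 1))⁻¹) * (Lam k * a k) := by
        rw [← Finset.mul_sum]
        congr 1
        exact Finset.sum_congr rfl fun m _ => by rw [Finset.mul_sum]
    _ = Real.exp M * ∑ k ∈ Finset.Icc 1 N, ∑ m ∈ Finset.Icc k N,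
          ((Lam m)⁻¹ - (Lam (m + 1))⁻¹) * (Lam k * a k) := by
        congr 1
        refine Finset.sum_comm' fun m k => ?_
        simp only [Finset.mem_Icc]
        omega
    _ = Real.exp M * ∑ k ∈ Finset.Icc 1 N, ((Lam k)⁻¹ - (Lam (N + 1))⁻¹) * (Lam k * a k) := by
        congr 1
        refine Finset.sum_congr rfl fun k hk => ?_
        have hk2 := (Finset.mem_Icc.mp hk).2
        rw [← Finset.sum_mul, tele_sum (fun m => (Lam m)⁻¹) N k (by omega)]
    _ ≤ Real.exp M * ∑ k ∈ Finset.Icc 1 N, a k := by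
        refine mul_le_mul_of_nonneg_left ?_ (Real.exp_pos M).le
        refine Finset.sum_le_sum fun k hk => ?_
        have hk1 := (Finset.mem_Icc.mp hk).1
        have hΛk := hΛpos k hk1
        have hΛN := hΛpos (N + 1) (by omega)
        have h1 : ((Lam k)⁻¹ - (Lam (N + 1))⁻¹) * (Lam k * a k) ≤ (Lam k)⁻¹ * (Lam k * a k) :=
          mul_le_mul_of_nonneg_right (sub_le_self _ (inv_nonneg.mpr hΛN.le))
            (mul_nonneg hΛk.le (ha k))
        refine h1.trans_eq ?_
        field_simp
    _ ≤ Real.exp M * ∑' n : ℕ, a (n + 1) := by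
        refine mul_le_mul_of_nonneg_left ?_ (Real.exp_pos M).le
        rw [← reindex N a]
        exact Summable.sum_le_tsum (Finset.range N) (fun i _ => ha _) hs
end

section
/- Let p > 1, (\lambda_n) positive, \Lambda_n = \sum_{i=1}^n \lambda_i, (w_n) positive, (a_n) non-negative, A_n = (\sum_{k=1}^n \lambda_k a_k)/\Lambda_n. Then for every N \ge 1: \sum_{n=1}^N (\sum_{k=1}^n w_k)^{-(p-1)} (w_n^{p-1}/\lambda_n^p - w_{n+1}^{p-1}/\lambda_{n+1}^p) \Lambda_n^p A_n^p \le \sum_{n=1}^N a_n^p. -/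
open Finset

private lemma young' {p : ℝ} (hp : 1 < p) {s t : ℝ} (hs : 0 ≤ s) (ht : 0 ≤ t) :
    p * t ^ (p - 1) * s ≤ s ^ p + (p - 1) * t ^ p := by
  have hpq : p.HolderConjugate (p / (p - 1)) :=
    (Real.holderConjugate_iff_eq_conjExponent hp).mpr rfl
  have h := Real.young_inequality_of_nonneg hs (Real.rpow_nonneg ht (p - 1)) hpq
  have ht2 : (t ^ (p - 1)) ^ (p / (p - 1)) = t ^ p := by
    rw [← Real.rpow_mul ht]
    congr 1
    rw [mul_div_assoc', mul_comm, mul_div_assoc, div_self (by linarith : p - 1 ≠ 0), mul_one]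
  rw [ht2] at h
  have hp0 : (0:ℝ) < p := by linarith
  have hp1 : (0:ℝ) < p - 1 := by linarith
  have h2 : p * (s * t ^ (p - 1)) ≤ p * (s ^ p / p + t ^ p / (p / (p - 1))) :=
    mul_le_mul_of_nonneg_left h hp0.le
  have h3 : p * (s ^ p / p + t ^ p / (p / (p - 1))) = s ^ p + (p - 1) * t ^ p := by
    field_simp
  rw [h3] at h2
  linarith [h2]

private lemma key {p : ℝ} (hp : 1 < p) {w lam a W' S' : ℝ}
    (hw : 0 < w) (hlam : 0 < lam) (ha : 0 ≤ a) (hW' : 0 ≤ W') (hS' : 0 ≤ S')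
    (hz : W' = 0 → S' = 0) :
    w ^ (p - 1) / lam ^ p *
        ((W' + w) ^ (1 - p) * (S' + lam * a) ^ p - W' ^ (1 - p) * S' ^ p)
      ≤ a ^ p := by
  have hp0 : (0:ℝ) < p := by linarith
  have hp1 : (0:ℝ) < p - 1 := by linarith
  have hW : (0:ℝ) < W' + w := by linarith
  have hS : (0:ℝ) ≤ S' + lam * a := by positivity
  set t : ℝ := (S' + lam * a) / (W' + w) with htdef
  have ht : 0 ≤ t := div_nonneg hS hW.le
  have hSt : S' + lam * a = t * (W' + w) := (div_mul_cancel₀ _ hW.ne').symm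
  -- h1 : (W'+w)^(1-p) * (S'+lam*a)^p = t^p * (W'+w)
  have h1 : (W' + w) ^ (1 - p) * (S' + lam * a) ^ p = t ^ p * (W' + w) := by
    rw [hSt, Real.mul_rpow ht hW.le]
    have : (W' + w) ^ (1 - p) * (t ^ p * (W' + w) ^ p)
        = t ^ p * ((W' + w) ^ (1 - p) * (W' + w) ^ p) := by ring
    rw [this, ← Real.rpow_add hW, (by ring : 1 - p + p = (1:ℝ)), Real.rpow_one]
  -- pointwise "t*t^(p-1)=t^p"
  have htp : t ^ (p - 1) * t = t ^ p := by
    rcases eq_or_lt_of_le ht with h0 | h0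
    · rw [← h0]
      rw [Real.zero_rpow hp1.ne', Real.zero_rpow hp0.ne', zero_mul]
    · rw [← Real.rpow_add_one h0.ne' (p - 1), (by ring : p - 1 + 1 = p)]
  -- Claim1
  have claim1 : p * (t ^ (p - 1) * S') ≤ W' ^ (1 - p) * S' ^ p + (p - 1) * (t ^ p * W') := by
    rcases eq_or_lt_of_le hW' with h0 | h0
    · have hS0 : S' = 0 := hz h0.symm
      rw [hS0, ← h0, Real.zero_rpow hp0.ne']
      simp
    · have hs : 0 ≤ S' / W' := div_nonneg hS' h0.le
      have hS's : S' = S' / W' * W' := (div_mul_cancel₀ _ h0.ne').symm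
      have hT' : W' ^ (1 - p) * S' ^ p = (S' / W') ^ p * W' := by
        conv_lhs => rw [hS's]
        rw [Real.mul_rpow hs h0.le]
        have : W' ^ (1 - p) * ((S' / W') ^ p * W' ^ p)
            = (S' / W') ^ p * (W' ^ (1 - p) * W' ^ p) := by ring
        rw [this, ← Real.rpow_add h0, (by ring : 1 - p + p = (1:ℝ)), Real.rpow_one]
      have hy := young' hp hs ht
      calc p * (t ^ (p - 1) * S') = p * t ^ (p - 1) * (S' / W') * W' := by
            conv_lhs => rw [hS's]
            ring
        _ ≤ ((S' / W') ^ p + (p - 1) * t ^ p) * W' :=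
            mul_le_mul_of_nonneg_right hy h0.le
        _ = W' ^ (1 - p) * S' ^ p + (p - 1) * (t ^ p * W') := by rw [hT']; ring
  -- Claim2
  have e1 : t ^ (p - 1) * (S' + lam * a) = t ^ p * (W' + w) := by
    rw [hSt, ← mul_assoc, htp]
  have claim2 : t ^ p * (W' + w) - W' ^ (1 - p) * S' ^ p
      ≤ p * (t ^ (p - 1) * (lam * a)) - (p - 1) * (t ^ p * w) := by
    have e2 : p * (t ^ (p - 1) * (lam * a))
        = p * (t ^ p * W') + p * (t ^ p * w) - p * (t ^ (p - 1) * S') := by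
      have : t ^ (p - 1) * (lam * a) = t ^ (p - 1) * (S' + lam * a) - t ^ (p - 1) * S' := by
        ring
      rw [this, e1]
      ring
    have e3 : t ^ p * (W' + w) = t ^ p * W' + t ^ p * w := by ring
    rw [e2, e3]
    linarith [claim1]
  -- multiply by d and conclude via Young again
  have hd : (0:ℝ) ≤ w ^ (p - 1) / lam ^ p := by positivity
  have step := mul_le_mul_of_nonneg_left claim2 hd
  rw [h1]
  refine le_trans step ?_
  have hu : (0:ℝ) ≤ t * w / lam := by positivity
  have e5 : (t * w / lam) ^ (p - 1) = t ^ (p - 1) * w ^ (p - 1) / lam ^ (p - 1) := by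
    rw [Real.div_rpow (by positivity) hlam.le, Real.mul_rpow ht hw.le]
  have e6 : (t * w / lam) ^ p = t ^ p * w ^ p / lam ^ p := by
    rw [Real.div_rpow (by positivity) hlam.le, Real.mul_rpow ht hw.le]
  have hlp : lam ^ p = lam ^ (p - 1) * lam := by
    rw [← Real.rpow_add_one hlam.ne' (p - 1), (by ring : p - 1 + 1 = p)]
  have hwp : w ^ p = w ^ (p - 1) * w := by
    rw [← Real.rpow_add_one hw.ne' (p - 1), (by ring : p - 1 + 1 = p)]
  have e7 : w ^ (p - 1) / lam ^ p * (p * (t ^ (p - 1) * (lam * a)) - (p - 1) * (t ^ p * w))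
      = p * (t * w / lam) ^ (p - 1) * a - (p - 1) * (t * w / lam) ^ p := by
    rw [e5, e6, hwp, hlp]
    have hl1 : lam ^ (p - 1) ≠ 0 := by positivity
    field_simp
  rw [e7]
  have := young' hp ha hu
  linarith

private lemma abel_sum (f g : ℕ → ℝ) (hg0 : g 0 = 0) (N : ℕ) :
    ∑ n ∈ Icc 1 N, (f n - f (n + 1)) * g n
      = ∑ n ∈ Icc 1 N, f n * (g n - g (n - 1)) - f (N + 1) * g N := by
  induction N with
  | zero => simp [hg0]
  | succ N ih =>
      rw [Finset.sum_Icc_succ_top (by omega : 1 ≤ N + 1),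
        Finset.sum_Icc_succ_top (by omega : 1 ≤ N + 1), ih]
      simp only [Nat.add_sub_cancel]
      ring

/-- Inequality (5.3) of the paper. -/
theorem ineq_5_3 (p : ℝ) (hp : 1 < p)
    (lam Lam w a A : ℕ → ℝ) (hlam : ∀ n, 0 < lam n)
    (hLam : ∀ n, Lam n = ∑ i ∈ Finset.Icc 1 n, lam i)
    (hw : ∀ n, 0 < w n) (ha : ∀ n, 0 ≤ a n)
    (hA : ∀ n, A n = (∑ k ∈ Finset.Icc 1 n, lam k * a k) / Lam n)
    (N : ℕ) (hN : 1 ≤ N) :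
    ∑ n ∈ Finset.Icc 1 N,
        (∑ k ∈ Finset.Icc 1 n, w k) ^ (-(p - 1)) *
          (w n ^ (p - 1) / lam n ^ p - w (n + 1) ^ (p - 1) / lam (n + 1) ^ p) *
          Lam n ^ p * A n ^ p ≤
      ∑ n ∈ Finset.Icc 1 N, a n ^ p := by
  have hp1 : (0:ℝ) < p - 1 := by linarith
  have hp0 : (0:ℝ) < p := by linarith
  set Wf : ℕ → ℝ := fun n => ∑ k ∈ Icc 1 n, w k with hWf
  set Sf : ℕ → ℝ := fun n => ∑ k ∈ Icc 1 n, lam k * a k with hSf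
  set d : ℕ → ℝ := fun n => w n ^ (p - 1) / lam n ^ p with hd
  set T : ℕ → ℝ := fun n => Wf n ^ (1 - p) * Sf n ^ p with hT
  have hWfnn : ∀ n, 0 ≤ Wf n := fun n => Finset.sum_nonneg fun i _ => (hw i).le
  have hSfnn : ∀ n, 0 ≤ Sf n :=
    fun n => Finset.sum_nonneg fun i _ => mul_nonneg (hlam i).le (ha i)
  have hWfpos : ∀ n, 1 ≤ n → 0 < Wf n := fun n hn =>
    Finset.sum_pos (fun i _ => hw i) ⟨1, by simp [hn]⟩
  have hdnn : ∀ n, 0 ≤ d n := fun n => by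
    have := (hlam n); have := (hw n); positivity
  have hT0 : T 0 = 0 := by
    simp only [hT, hWf, hSf]
    simp [Real.zero_rpow (by linarith : 1 - p ≠ 0)]
  -- rewrite each summand
  have hterm : ∀ n ∈ Icc 1 N,
      (∑ k ∈ Finset.Icc 1 n, w k) ^ (-(p - 1)) *
          (w n ^ (p - 1) / lam n ^ p - w (n + 1) ^ (p - 1) / lam (n + 1) ^ p) *
          Lam n ^ p * A n ^ p
        = (d n - d (n + 1)) * T n := by
    intro n hn
    have hn1 : 1 ≤ n := (Finset.mem_Icc.mp hn).1
    have hLpos : 0 < Lam n := by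
      rw [hLam n]; exact Finset.sum_pos (fun i _ => hlam i) ⟨1, by simp [hn1]⟩
    have hAnn : 0 ≤ A n := by
      rw [hA n]; exact div_nonneg (hSfnn n) hLpos.le
    have hLA : Lam n ^ p * A n ^ p = Sf n ^ p := by
      rw [← Real.mul_rpow hLpos.le hAnn, hA n, mul_div_cancel₀ _ hLpos.ne']
    have hneg : -(p - 1) = 1 - p := by ring
    calc (∑ k ∈ Finset.Icc 1 n, w k) ^ (-(p - 1)) *
          (w n ^ (p - 1) / lam n ^ p - w (n + 1) ^ (p - 1) / lam (n + 1) ^ p) *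
          Lam n ^ p * A n ^ p
        = Wf n ^ (-(p - 1)) * (d n - d (n + 1)) * (Lam n ^ p * A n ^ p) := by
          simp only [hWf, hd]; ring
      _ = (d n - d (n + 1)) * T n := by
          rw [hLA, hneg, hT]; ring
  rw [Finset.sum_congr rfl hterm, abel_sum d T hT0 N]
  have hTnn : ∀ n, 0 ≤ T n := fun n =>
    mul_nonneg (Real.rpow_nonneg (hWfnn n) _) (Real.rpow_nonneg (hSfnn n) _)
  have hstep : ∑ n ∈ Icc 1 N, d n * (T n - T (n - 1)) ≤ ∑ n ∈ Icc 1 N, a n ^ p := by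
    apply Finset.sum_le_sum
    intro n hn
    have hn1 : 1 ≤ n := (Finset.mem_Icc.mp hn).1
    obtain ⟨m, rfl⟩ : ∃ m, n = m + 1 := ⟨n - 1, by omega⟩
    have hWrec : Wf (m + 1) = Wf m + w (m + 1) := by
      simp only [hWf]; exact Finset.sum_Icc_succ_top (by omega) _
    have hSrec : Sf (m + 1) = Sf m + lam (m + 1) * a (m + 1) := by
      simp only [hSf]; exact Finset.sum_Icc_succ_top (by omega) _
    have hz : Wf m = 0 → Sf m = 0 := by
      intro h0
      rcases Nat.eq_zero_or_pos m with hm | hm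
      · simp [hSf, hm]
      · exact absurd h0 (hWfpos m hm).ne'
    have hkey := key hp (hw (m + 1)) (hlam (m + 1)) (ha (m + 1)) (hWfnn m) (hSfnn m) hz
    simp only [Nat.add_sub_cancel]
    calc d (m + 1) * (T (m + 1) - T m)
        = w (m + 1) ^ (p - 1) / lam (m + 1) ^ p *
            ((Wf m + w (m + 1)) ^ (1 - p) * (Sf m + lam (m + 1) * a (m + 1)) ^ p
              - Wf m ^ (1 - p) * Sf m ^ p) := by
          simp only [hd, hT, hWrec, hSrec]
      _ ≤ a (m + 1) ^ p := hkey
  calc ∑ n ∈ Icc 1 N, d n * (T n - T (n - 1)) - d (N + 1) * T N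
      ≤ ∑ n ∈ Icc 1 N, d n * (T n - T (n - 1)) := by
        have : 0 ≤ d (N + 1) * T N := mul_nonneg (hdnn _) (hTnn _)
        linarith
    _ ≤ ∑ n ∈ Icc 1 N, a n ^ p := hstep
end

section
/- Let p > 1, (\lambda_n) positive, \Lambda_n = \sum_{i=1}^n \lambda_i, (b_n) positive, (a_n) non-negative, A_n = (\sum_{k=1}^n \lambda_k a_k)/\Lambda_n. Then for every N \ge 1: \sum_{n=1}^N ((\sum_{k=1}^n \lambda_k \prod_{i=k}^n b_i^{1/(p-1)})/\Lambda_n)^{-(p-1)} (b_n/\lambda_n - 1/\lambda_{n+1}) \Lambda_n A_n^p \le \sum_{n=1}^N a_n^p. -/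
open Finset

private lemma radon2 {p x y s t : ℝ} (hp : 1 < p) (hx : 0 ≤ x) (hy : 0 ≤ y)
    (hs : 0 < s) (ht : 0 < t) :
    (x + y) ^ p / (s + t) ^ (p - 1) ≤ x ^ p / s ^ (p - 1) + y ^ p / t ^ (p - 1) := by
  have hst : 0 < s + t := by linarith
  have h := (convexOn_rpow hp.le).2 (Set.mem_Ici.2 (div_nonneg hx hs.le))
      (Set.mem_Ici.2 (div_nonneg hy ht.le))
      (by positivity : (0:ℝ) ≤ s / (s + t)) (by positivity : (0:ℝ) ≤ t / (s + t))
      (by field_simp)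
  simp only [smul_eq_mul] at h
  rw [show s / (s + t) * (x / s) + t / (s + t) * (y / t) = (x + y) / (s + t) by
    field_simp] at h
  rw [Real.div_rpow (by linarith) hst.le, Real.div_rpow hx hs.le, Real.div_rpow hy ht.le] at h
  have hsp : s ^ p = s ^ (p - 1) * s := by
    rw [← Real.rpow_add_one hs.ne']; norm_num
  have htp : t ^ p = t ^ (p - 1) * t := by
    rw [← Real.rpow_add_one ht.ne']; norm_num
  have hstp : (s + t) ^ p = (s + t) ^ (p - 1) * (s + t) := by
    rw [← Real.rpow_add_one hst.ne']; norm_num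
  have hs1 : (0:ℝ) < s ^ (p - 1) := Real.rpow_pos_of_pos hs _
  have ht1 : (0:ℝ) < t ^ (p - 1) := Real.rpow_pos_of_pos ht _
  have hst1 : (0:ℝ) < (s + t) ^ (p - 1) := Real.rpow_pos_of_pos hst _
  rw [hsp, htp, hstp] at h
  have hs1' := hs1.ne'
  have ht1' := ht1.ne'
  have hst1' := hst1.ne'
  calc (x + y) ^ p / (s + t) ^ (p - 1)
      = (x + y) ^ p / ((s + t) ^ (p - 1) * (s + t)) * (s + t) := by
        field_simp
    _ ≤ (s / (s + t) * (x ^ p / (s ^ (p - 1) * s)) +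
          t / (s + t) * (y ^ p / (t ^ (p - 1) * t))) * (s + t) :=
        mul_le_mul_of_nonneg_right h hst.le
    _ = x ^ p / s ^ (p - 1) + y ^ p / t ^ (p - 1) := by field_simp

/-- Inequality (5.4) of the paper. -/
theorem ineq_5_4 (p : ℝ) (hp : 1 < p)
    (lam Lam b a A : ℕ → ℝ) (hlam : ∀ n, 0 < lam n)
    (hLam : ∀ n, Lam n = ∑ i ∈ Finset.Icc 1 n, lam i)
    (hb : ∀ n, 0 < b n) (ha : ∀ n, 0 ≤ a n)
    (hA : ∀ n, A n = (∑ k ∈ Finset.Icc 1 n, lam k * a k) / Lam n)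
    (N : ℕ) (hN : 1 ≤ N) :
    ∑ n ∈ Finset.Icc 1 N,
        ((∑ k ∈ Finset.Icc 1 n, lam k * ∏ i ∈ Finset.Icc k n, b i ^ (1 / (p - 1))) /
              Lam n) ^ (-(p - 1)) *
          (b n / lam n - 1 / lam (n + 1)) * Lam n * A n ^ p ≤
      ∑ n ∈ Finset.Icc 1 N, a n ^ p := by
  have hp1 : (0:ℝ) < p - 1 := by linarith
  set f : ℕ → ℝ := fun i => b i ^ (1 / (p - 1)) with hf
  set S : ℕ → ℝ := fun n => ∑ k ∈ Finset.Icc 1 n, lam k * ∏ i ∈ Finset.Icc k n, f i with hSd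
  set T : ℕ → ℝ := fun n => ∑ k ∈ Finset.Icc 1 n, lam k * a k with hTd
  have hfpos : ∀ i, 0 < f i := fun i => Real.rpow_pos_of_pos (hb i) _
  have hfp : ∀ i, f i ^ (p - 1) = b i := by
    intro i
    show (b i ^ (1 / (p - 1))) ^ (p - 1) = b i
    rw [← Real.rpow_mul (hb i).le, one_div, inv_mul_cancel₀ hp1.ne', Real.rpow_one]
  have hSpos : ∀ n, 1 ≤ n → 0 < S n := by
    intro n hn
    apply Finset.sum_pos
    · intro k _
      exact mul_pos (hlam k) (Finset.prod_pos fun i _ => hfpos i)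
    · exact Finset.nonempty_Icc.2 hn
  have hLpos : ∀ n, 1 ≤ n → 0 < Lam n := by
    intro n hn
    rw [hLam]
    exact Finset.sum_pos (fun i _ => hlam i) (Finset.nonempty_Icc.2 hn)
  have hTnn : ∀ n, 0 ≤ T n := fun n =>
    Finset.sum_nonneg fun k _ => mul_nonneg (hlam k).le (ha k)
  have hAT : ∀ n, A n = T n / Lam n := fun n => hA n
  have hSrec : ∀ n, S (n + 1) = f (n + 1) * (S n + lam (n + 1)) := by
    intro n
    calc S (n + 1) = ∑ k ∈ Finset.Icc 1 (n + 1), lam k * ∏ i ∈ Finset.Icc k (n + 1), f i := rfl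
      _ = ∑ k ∈ Finset.Icc 1 (n + 1), lam k * (∏ i ∈ Finset.Icc k n, f i) * f (n + 1) := by
          refine Finset.sum_congr rfl fun k hk => ?_
          rw [Finset.prod_Icc_succ_top (Finset.mem_Icc.1 hk).2]; ring
      _ = (∑ k ∈ Finset.Icc 1 (n + 1), lam k * ∏ i ∈ Finset.Icc k n, f i) * f (n + 1) := by
          rw [Finset.sum_mul]
      _ = (S n + lam (n + 1) * ∏ i ∈ Finset.Icc (n + 1) n, f i) * f (n + 1) := by
          rw [Finset.sum_Icc_succ_top (by omega : 1 ≤ n + 1)]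
      _ = f (n + 1) * (S n + lam (n + 1)) := by
          rw [Finset.Icc_eq_empty (by omega : ¬ n + 1 ≤ n), Finset.prod_empty, mul_one]; ring
  have hTrec : ∀ n, T (n + 1) = T n + lam (n + 1) * a (n + 1) := by
    intro n
    exact Finset.sum_Icc_succ_top (by omega : 1 ≤ n + 1) _
  have htermeq : ∀ n, 1 ≤ n →
      (S n / Lam n) ^ (-(p - 1)) * (b n / lam n - 1 / lam (n + 1)) * Lam n * A n ^ p
        = b n * T n ^ p / (S n ^ (p - 1) * lam n) - T n ^ p / (S n ^ (p - 1) * lam (n + 1)) := by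
    intro n hn
    have hS := hSpos n hn
    have hL := hLpos n hn
    have hSp : (0:ℝ) < S n ^ (p - 1) := Real.rpow_pos_of_pos hS _
    have hLp1 : (0:ℝ) < Lam n ^ (p - 1) := Real.rpow_pos_of_pos hL _
    have hLp : Lam n ^ p = Lam n ^ (p - 1) * Lam n := by
      rw [← Real.rpow_add_one hL.ne']; norm_num
    rw [hAT n, Real.div_rpow (hTnn n) hL.le,
      Real.rpow_neg (div_nonneg hS.le hL.le), Real.div_rpow hS.le hL.le, inv_div, hLp]
    have h1 := hSp.ne'
    have h2 := hLp1.ne'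
    have h3 := hL.ne'
    have h4 := (hlam n).ne'
    have h5 := (hlam (n + 1)).ne'
    field_simp
  have hE1 : b 1 * T 1 ^ p / (S 1 ^ (p - 1) * lam 1) = a 1 ^ p := by
    have hT1 : T 1 = lam 1 * a 1 := by
      show ∑ k ∈ Finset.Icc 1 1, lam k * a k = _
      simp
    have hS1 : S 1 = lam 1 * f 1 := by
      show ∑ k ∈ Finset.Icc 1 1, lam k * ∏ i ∈ Finset.Icc k 1, f i = _
      simp
    have hlp : lam 1 ^ p = lam 1 ^ (p - 1) * lam 1 := by
      rw [← Real.rpow_add_one (hlam 1).ne']; norm_num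
    rw [hT1, hS1, Real.mul_rpow (hlam 1).le (ha 1),
      Real.mul_rpow (hlam 1).le (hfpos 1).le, hfp 1, hlp]
    have h1 := (hlam 1).ne'
    have h2 := (hb 1).ne'
    have h3 := (Real.rpow_pos_of_pos (hlam 1) (p - 1)).ne'
    field_simp
  have hstep : ∀ n, 1 ≤ n →
      b (n + 1) * T (n + 1) ^ p / (S (n + 1) ^ (p - 1) * lam (n + 1))
        ≤ a (n + 1) ^ p + T n ^ p / (S n ^ (p - 1) * lam (n + 1)) := by
    intro n hn
    have hS := hSpos n hn
    have hSp : (0:ℝ) < S n ^ (p - 1) := Real.rpow_pos_of_pos hS _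
    have hl := hlam (n + 1)
    have key := radon2 hp (hTnn n) (mul_nonneg hl.le (ha (n + 1))) hS hl
    have hlp : lam (n + 1) ^ p = lam (n + 1) ^ (p - 1) * lam (n + 1) := by
      rw [← Real.rpow_add_one hl.ne']; norm_num
    have h1 : (lam (n + 1) * a (n + 1)) ^ p / lam (n + 1) ^ (p - 1)
        = lam (n + 1) * a (n + 1) ^ p := by
      rw [Real.mul_rpow hl.le (ha _), hlp]
      have := (Real.rpow_pos_of_pos hl (p - 1)).ne'
      field_simp
    rw [h1] at key
    have h2 : S (n + 1) ^ (p - 1) = b (n + 1) * (S n + lam (n + 1)) ^ (p - 1) := by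
      rw [hSrec n, Real.mul_rpow (hfpos _).le (by positivity), hfp]
    have hD : (0:ℝ) < (S n + lam (n + 1)) ^ (p - 1) :=
      Real.rpow_pos_of_pos (by positivity) _
    rw [h2, hTrec n]
    have e1 : b (n + 1) * (T n + lam (n + 1) * a (n + 1)) ^ p
        / (b (n + 1) * (S n + lam (n + 1)) ^ (p - 1) * lam (n + 1))
        = ((T n + lam (n + 1) * a (n + 1)) ^ p / (S n + lam (n + 1)) ^ (p - 1)) / lam (n + 1) := by
      rw [mul_assoc, mul_div_mul_left _ _ (hb (n + 1)).ne', div_div]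
    have e2 : a (n + 1) ^ p + T n ^ p / (S n ^ (p - 1) * lam (n + 1))
        = (T n ^ p / S n ^ (p - 1) + lam (n + 1) * a (n + 1) ^ p) / lam (n + 1) := by
      have := hSp.ne'
      field_simp
      ring
    rw [e1, e2]
    gcongr
  have main : ∀ n, 1 ≤ n →
      (∑ k ∈ Finset.Icc 1 n,
          (S k / Lam k) ^ (-(p - 1)) * (b k / lam k - 1 / lam (k + 1)) * Lam k * A k ^ p)
        + T n ^ p / (S n ^ (p - 1) * lam (n + 1)) ≤ ∑ k ∈ Finset.Icc 1 n, a k ^ p := by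
    intro n hn
    induction n with
    | zero => omega
    | succ m ih =>
      by_cases hm : 1 ≤ m
      · have IH := ih hm
        rw [Finset.sum_Icc_succ_top (show 1 ≤ m + 1 by omega),
          Finset.sum_Icc_succ_top (show 1 ≤ m + 1 by omega), htermeq (m + 1) (by omega)]
        have := hstep m hm
        linarith
      · have hm0 : m = 0 := by omega
        subst hm0
        rw [show Finset.Icc 1 1 = {1} from Finset.Icc_self 1]
        simp only [Finset.sum_singleton]
        rw [htermeq 1 le_rfl]
        linarith [hE1]
  have hG : 0 ≤ T N ^ p / (S N ^ (p - 1) * lam (N + 1)) :=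
    div_nonneg (Real.rpow_nonneg (hTnn N) _)
      (mul_nonneg (Real.rpow_pos_of_pos (hSpos N hN) _).le (hlam (N + 1)).le)
  exact le_trans (le_add_of_nonneg_right hG) (main N hN)
end

section
/- Improved Hardy inequality: for p > 1 and any non-negative sequence (a_n), \sum_{n=1}^\infty ((\sum_{k=1}^n \prod_{i=k}^n (1 + (1 - 1/p)/i)^{1/(p-1)})/n)^{-(p-1)} ((1/n) \sum_{k=1}^n a_k)^p \le (p/(p-1)) \sum_{n=1}^\infty a_n^p. -/
open Finset

noncomputable def hardyR (p : ℝ) (k m : ℕ) : ℝ :=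
  ∏ i ∈ Finset.Icc k m, (((i : ℝ) + (1 - 1 / p)) / i)

lemma hardy_theta_pos {p : ℝ} (hp : 1 < p) : 0 < 1 - 1 / p := by
  have hp0 : 0 < p := lt_trans one_pos hp
  have : 1 / p < 1 := by rw [div_lt_one hp0]; exact hp
  linarith

lemma hardyR_one_le {p : ℝ} (hp : 1 < p) {k : ℕ} (hk : 1 ≤ k) (m : ℕ) :
    1 ≤ hardyR p k m := by
  rw [hardyR]
  calc (1 : ℝ) = ∏ i ∈ Finset.Icc k m, 1 := by rw [Finset.prod_const_one]
    _ ≤ ∏ i ∈ Finset.Icc k m, (((i : ℝ) + (1 - 1 / p)) / i) := by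
        refine Finset.prod_le_prod (fun i _ => zero_le_one) fun i hi => ?_
        have hi1 : 1 ≤ i := le_trans hk (Finset.mem_Icc.mp hi).1
        have hi0 : (0 : ℝ) < i := by exact_mod_cast hi1
        rw [le_div_iff₀ hi0]
        have := (hardy_theta_pos hp).le
        linarith

lemma hardyR_pos {p : ℝ} (hp : 1 < p) {k : ℕ} (hk : 1 ≤ k) (m : ℕ) :
    0 < hardyR p k m := lt_of_lt_of_le one_pos (hardyR_one_le hp hk m)

lemma hardy_telescope {p : ℝ} (hp : 1 < p) {k : ℕ} (hk : 1 ≤ k) (N : ℕ) :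
    ∑ m ∈ Finset.Icc k N, 1 / ((m : ℝ) * hardyR p k m)
      = p / (p - 1) * (1 - 1 / hardyR p k N) := by
  have hp0 : (0 : ℝ) < p := lt_trans one_pos hp
  have hp1 : (0 : ℝ) < p - 1 := by linarith
  induction N with
  | zero =>
      rw [Finset.Icc_eq_empty (by omega), hardyR, Finset.Icc_eq_empty (by omega)]
      simp
  | succ N ih =>
      by_cases h : k ≤ N + 1
      · rw [Finset.sum_Icc_succ_top h, ih]
        have hrec : hardyR p k (N + 1)
            = hardyR p k N * ((((N : ℝ) + 1) + (1 - 1 / p)) / ((N : ℝ) + 1)) := by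
          rw [hardyR, hardyR, Finset.prod_Icc_succ_top h]
          push_cast
          ring
        rw [hrec]
        have hR := hardyR_pos hp hk N
        have hN1 : (0 : ℝ) < (N : ℝ) + 1 := by positivity
        have hθ := hardy_theta_pos hp
        have hNθ : (0 : ℝ) < ((N : ℝ) + 1) + (1 - 1 / p) := by linarith
        push_cast
        field_simp
        ring
      · have h' : N + 1 < k := by omega
        rw [Finset.Icc_eq_empty (by omega), hardyR, Finset.Icc_eq_empty (by omega)]
        rw [Finset.Icc_eq_empty (by omega), hardyR, Finset.Icc_eq_empty (by omega)] at ih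
        simpa using ih

lemma hardy_telescope_le {p : ℝ} (hp : 1 < p) {k : ℕ} (hk : 1 ≤ k) (N : ℕ) :
    ∑ m ∈ Finset.Icc k N, 1 / ((m : ℝ) * hardyR p k m) ≤ p / (p - 1) := by
  rw [hardy_telescope hp hk N]
  have hp1 : (0 : ℝ) < p - 1 := by linarith
  have hp0 : (0 : ℝ) < p := lt_trans one_pos hp
  have hq : (0 : ℝ) < p / (p - 1) := by positivity
  have hR := hardyR_pos hp hk N
  have h1 : 1 - 1 / hardyR p k N ≤ 1 := by
    have : 0 < 1 / hardyR p k N := by positivity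
    linarith
  calc p / (p - 1) * (1 - 1 / hardyR p k N) ≤ p / (p - 1) * 1 :=
        mul_le_mul_of_nonneg_left h1 hq.le
    _ = p / (p - 1) := mul_one _

/-- An improvement of Hardy's inequality. -/
theorem improved_hardy (p : ℝ) (hp : 1 < p)
    (a : ℕ → ℝ) (ha : ∀ n, 0 ≤ a n)
    (hsum : Summable fun n : ℕ => a (n + 1) ^ p) :
    ∑' n : ℕ,
        ((∑ k ∈ Finset.Icc 1 (n + 1),
              ∏ i ∈ Finset.Icc k (n + 1), (1 + (1 - 1 / p) / (i : ℝ)) ^ (1 / (p - 1))) /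
            ((n : ℝ) + 1)) ^ (-(p - 1)) *
          ((∑ k ∈ Finset.Icc 1 (n + 1), a k) / ((n : ℝ) + 1)) ^ p ≤
      (p / (p - 1)) * ∑' n : ℕ, a (n + 1) ^ p := by
  have hp0 : (0 : ℝ) < p := lt_trans one_pos hp
  have hp1 : (0 : ℝ) < p - 1 := by linarith
  have hθ := hardy_theta_pos hp
  set R : ℕ → ℕ → ℝ := hardyR p with hRdef
  have hprod : ∀ k m : ℕ, 1 ≤ k →
      (∏ i ∈ Finset.Icc k m, (1 + (1 - 1 / p) / (i : ℝ)) ^ (1 / (p - 1)))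
        = R k m ^ (1 / (p - 1)) := by
    intro k m hk
    rw [hRdef, hardyR, ← Real.finset_prod_rpow _ _ (fun i hi => ?_) _]
    · refine Finset.prod_congr rfl fun i hi => ?_
      have hi1 : 1 ≤ i := le_trans hk (Finset.mem_Icc.mp hi).1
      have hi0 : ((i : ℝ)) ≠ 0 := by positivity
      rw [add_div, div_self hi0]
    · have hi1 : 1 ≤ i := le_trans hk (Finset.mem_Icc.mp hi).1
      have hi0 : (0 : ℝ) < i := by exact_mod_cast hi1
      have : (0 : ℝ) ≤ (i : ℝ) + (1 - 1 / p) := by linarith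
      positivity
  set A : ℕ → ℝ := fun m => ∑ k ∈ Finset.Icc 1 m, a k with hAdef
  set T : ℕ → ℝ := fun m => ∑ k ∈ Finset.Icc 1 m, R k m ^ (1 / (p - 1)) with hTdef
  have hTpos : ∀ m : ℕ, 1 ≤ m → 0 < T m := by
    intro m hm
    refine Finset.sum_pos (fun k hk => ?_) ⟨1, Finset.mem_Icc.mpr ⟨le_refl 1, hm⟩⟩
    exact Real.rpow_pos_of_pos (hardyR_pos hp (Finset.mem_Icc.mp hk).1 m) _
  have hApos : ∀ m : ℕ, 0 ≤ A m :=
    fun m => Finset.sum_nonneg fun k _ => ha k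
  -- Hölder step
  have hHolder : ∀ m : ℕ, 1 ≤ m →
      A m ^ p ≤ (∑ k ∈ Finset.Icc 1 m, a k ^ p / R k m) * T m ^ (p - 1) := by
    intro m hm
    have hconj : Real.HolderConjugate p (p / (p - 1)) :=
      Real.HolderConjugate.conjExponent hp
    set X : ℝ := ∑ k ∈ Finset.Icc 1 m, a k ^ p / R k m with hXdef
    have hXnn : 0 ≤ X := by
      refine Finset.sum_nonneg fun k hk => ?_
      have h1 := hardyR_pos hp (Finset.mem_Icc.mp hk).1 m
      have h2 := ha k
      positivity
    have h1 : A m ≤ X ^ (1 / p) * T m ^ (1 / (p / (p - 1))) := by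
      have key := Real.inner_le_Lp_mul_Lq (Finset.Icc 1 m)
        (fun k => a k / R k m ^ (1 / p)) (fun k => R k m ^ (1 / p)) hconj
      have e1 : ∑ k ∈ Finset.Icc 1 m,
          (a k / R k m ^ (1 / p)) * (R k m ^ (1 / p)) = A m := by
        refine Finset.sum_congr rfl fun k hk => ?_
        have hR := hardyR_pos hp (Finset.mem_Icc.mp hk).1 m
        have hRp : R k m ^ (1 / p) ≠ 0 := (Real.rpow_pos_of_pos hR _).ne'
        field_simp
      have e2 : ∑ k ∈ Finset.Icc 1 m, |a k / R k m ^ (1 / p)| ^ p = X := by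
        refine Finset.sum_congr rfl fun k hk => ?_
        have hR := hardyR_pos hp (Finset.mem_Icc.mp hk).1 m
        have hRp : (0 : ℝ) < R k m ^ (1 / p) := Real.rpow_pos_of_pos hR _
        rw [abs_of_nonneg (div_nonneg (ha k) hRp.le)]
        rw [Real.div_rpow (ha k) hRp.le, ← Real.rpow_mul hR.le,
          one_div_mul_cancel hp0.ne', Real.rpow_one]
      have e3 : ∑ k ∈ Finset.Icc 1 m, |R k m ^ (1 / p)| ^ (p / (p - 1)) = T m := by
        refine Finset.sum_congr rfl fun k hk => ?_
        have hR := hardyR_pos hp (Finset.mem_Icc.mp hk).1 m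
        have hRp : (0 : ℝ) < R k m ^ (1 / p) := Real.rpow_pos_of_pos hR _
        rw [abs_of_nonneg hRp.le, ← Real.rpow_mul hR.le]
        congr 1
        field_simp
      rw [e1, e2, e3] at key
      exact key
    have h2 : A m ^ p ≤ (X ^ (1 / p) * T m ^ (1 / (p / (p - 1)))) ^ p :=
      Real.rpow_le_rpow (hApos m) h1 hp0.le
    refine le_trans h2 (le_of_eq ?_)
    have hTnn := (hTpos m hm).le
    rw [Real.mul_rpow (by positivity) (by positivity),
      ← Real.rpow_mul hXnn, ← Real.rpow_mul hTnn,
      one_div_mul_cancel hp0.ne', Real.rpow_one]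
    congr 2
    field_simp
  -- per-index bound
  have hterm : ∀ m : ℕ, 1 ≤ m →
      (T m / m) ^ (-(p - 1)) * (A m / m) ^ p
        ≤ ∑ k ∈ Finset.Icc 1 m, a k ^ p / ((m : ℝ) * R k m) := by
    intro m hm
    have hm0 : (0 : ℝ) < m := by exact_mod_cast hm
    have hT := hTpos m hm
    have hTm : (0 : ℝ) < T m / m := by positivity
    have hA := hApos m
    have h1 : (0 : ℝ) < (m : ℝ) ^ (p - 1) := Real.rpow_pos_of_pos hm0 _
    have h2 : (0 : ℝ) < T m ^ (p - 1) := Real.rpow_pos_of_pos hT _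
    have lhs_eq : (T m / m) ^ (-(p - 1)) * (A m / m) ^ p
        = A m ^ p / ((m : ℝ) * T m ^ (p - 1)) := by
      rw [Real.rpow_neg hTm.le, Real.div_rpow hT.le hm0.le, Real.div_rpow hA hm0.le]
      have hmp : (m : ℝ) ^ p = (m : ℝ) ^ (p - 1) * m := by
        rw [← Real.rpow_add_one hm0.ne' (p - 1)]
        norm_num
      rw [hmp]
      field_simp
    rw [lhs_eq]
    have hden : (0 : ℝ) < (m : ℝ) * T m ^ (p - 1) := by positivity
    have step : A m ^ p / ((m : ℝ) * T m ^ (p - 1))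
        ≤ ((∑ k ∈ Finset.Icc 1 m, a k ^ p / R k m) * T m ^ (p - 1))
            / ((m : ℝ) * T m ^ (p - 1)) :=
      (div_le_div_iff_of_pos_right hden).mpr (hHolder m hm)
    refine step.trans (le_of_eq ?_)
    rw [mul_comm (m : ℝ) (T m ^ (p - 1)), ← div_div, mul_div_assoc,
      div_self h2.ne', mul_one, Finset.sum_div]
    refine Finset.sum_congr rfl fun k hk => ?_
    rw [div_div, mul_comm]
  -- nonnegativity of the terms
  have hFnn : ∀ n : ℕ, 0 ≤
      ((∑ k ∈ Finset.Icc 1 (n + 1),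
            ∏ i ∈ Finset.Icc k (n + 1), (1 + (1 - 1 / p) / (i : ℝ)) ^ (1 / (p - 1))) /
          ((n : ℝ) + 1)) ^ (-(p - 1)) *
        ((∑ k ∈ Finset.Icc 1 (n + 1), a k) / ((n : ℝ) + 1)) ^ p := by
    intro n
    apply mul_nonneg
    · apply Real.rpow_nonneg
      apply div_nonneg _ (by positivity)
      refine Finset.sum_nonneg fun k _ => Finset.prod_nonneg fun i _ => ?_
      apply Real.rpow_nonneg
      have : (0 : ℝ) ≤ (1 - 1 / p) / i := div_nonneg hθ.le (Nat.cast_nonneg i)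
      linarith
    · exact Real.rpow_nonneg
        (div_nonneg (Finset.sum_nonneg fun k _ => ha k) (by positivity)) _
  -- sum everything
  have htsum_nn : (0 : ℝ) ≤ ∑' n : ℕ, a (n + 1) ^ p :=
    tsum_nonneg fun n => Real.rpow_nonneg (ha _) _
  refine tsum_le_of_sum_le' (by positivity) fun s => ?_
  obtain ⟨N, hsN⟩ := s.exists_nat_subset_range
  have hmain : ∑ n ∈ Finset.range N,
      ((∑ k ∈ Finset.Icc 1 (n + 1),
            ∏ i ∈ Finset.Icc k (n + 1), (1 + (1 - 1 / p) / (i : ℝ)) ^ (1 / (p - 1))) /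
          ((n : ℝ) + 1)) ^ (-(p - 1)) *
        ((∑ k ∈ Finset.Icc 1 (n + 1), a k) / ((n : ℝ) + 1)) ^ p
      ≤ (p / (p - 1)) * ∑ k ∈ Finset.Icc 1 N, a k ^ p := by
    have step1 : ∀ n : ℕ,
        ((∑ k ∈ Finset.Icc 1 (n + 1),
              ∏ i ∈ Finset.Icc k (n + 1), (1 + (1 - 1 / p) / (i : ℝ)) ^ (1 / (p - 1))) /
            ((n : ℝ) + 1)) ^ (-(p - 1)) *
          ((∑ k ∈ Finset.Icc 1 (n + 1), a k) / ((n : ℝ) + 1)) ^ p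
        ≤ ∑ k ∈ Finset.Icc 1 (n + 1), a k ^ p / (((n : ℝ) + 1) * R k (n + 1)) := by
      intro n
      have e : (∑ k ∈ Finset.Icc 1 (n + 1),
            ∏ i ∈ Finset.Icc k (n + 1), (1 + (1 - 1 / p) / (i : ℝ)) ^ (1 / (p - 1)))
          = T (n + 1) :=
        Finset.sum_congr rfl fun k hk => hprod k (n + 1) (Finset.mem_Icc.mp hk).1
      have h := hterm (n + 1) (by omega)
      push_cast at h
      rw [e]
      exact h
    calc ∑ n ∈ Finset.range N, _ ≤
        ∑ n ∈ Finset.range N, ∑ k ∈ Finset.Icc 1 (n + 1),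
          a k ^ p / (((n : ℝ) + 1) * R k (n + 1)) :=
          Finset.sum_le_sum fun n _ => step1 n
      _ = ∑ m ∈ Finset.Icc 1 N, ∑ k ∈ Finset.Icc 1 m,
          a k ^ p / ((m : ℝ) * R k m) := by
          rw [← Finset.Ico_add_one_right_eq_Icc, Finset.sum_Ico_eq_sum_range]
          refine (Finset.sum_congr rfl fun n _ => ?_).symm
          have h1n : 1 + n = n + 1 := by omega
          rw [h1n]
          push_cast
          rfl
      _ = ∑ k ∈ Finset.Icc 1 N, ∑ m ∈ Finset.Icc k N,
          a k ^ p / ((m : ℝ) * R k m) := by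
          refine Finset.sum_comm' fun m k => ?_
          simp only [Finset.mem_Icc]
          omega
      _ ≤ ∑ k ∈ Finset.Icc 1 N, a k ^ p * (p / (p - 1)) := by
          refine Finset.sum_le_sum fun k hk => ?_
          have hk1 : 1 ≤ k := (Finset.mem_Icc.mp hk).1
          have : ∑ m ∈ Finset.Icc k N, a k ^ p / ((m : ℝ) * R k m)
              = a k ^ p * ∑ m ∈ Finset.Icc k N, 1 / ((m : ℝ) * R k m) := by
            rw [Finset.mul_sum]
            exact Finset.sum_congr rfl fun m _ => by rw [mul_one_div]
          rw [this]
          exact mul_le_mul_of_nonneg_left (hardy_telescope_le hp hk1 N)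
            (Real.rpow_nonneg (ha k) _)
      _ = (p / (p - 1)) * ∑ k ∈ Finset.Icc 1 N, a k ^ p := by
          rw [← Finset.sum_mul, mul_comm]
  have hfin : ∑ k ∈ Finset.Icc 1 N, a k ^ p ≤ ∑' n : ℕ, a (n + 1) ^ p := by
    rw [← Finset.Ico_add_one_right_eq_Icc, Finset.sum_Ico_eq_sum_range]
    have e : ∀ n : ℕ, a (1 + n) ^ p = a (n + 1) ^ p := fun n => by rw [add_comm]
    rw [Finset.sum_congr rfl fun n _ => e n]
    exact Summable.sum_le_tsum (Finset.range N) (fun n _ => Real.rpow_nonneg (ha _) _) hsum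
  calc ∑ n ∈ s, _ ≤ ∑ n ∈ Finset.range N, _ :=
        Finset.sum_le_sum_of_subset_of_nonneg hsN fun i _ _ => hFnn i
    _ ≤ (p / (p - 1)) * ∑ k ∈ Finset.Icc 1 N, a k ^ p := hmain
    _ ≤ (p / (p - 1)) * ∑' n : ℕ, a (n + 1) ^ p :=
        mul_le_mul_of_nonneg_left hfin (by positivity)
end

section
/- For p > 1 and every n \ge 1, (\sum_{k=1}^n \prod_{i=k}^n (1 + (1 - 1/p)/i)^{1/(p-1)})/n \le p/(p-1), so the improved Hardy inequality is indeed at least as strong as Hardy's inequality. -/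
lemma aux_exp_ineq (x q : ℝ) (hx0 : 0 < x) (hx1 : x < 1) (hq : 0 < q) :
    (1 - x) ^ q * (1 + q * x) ≤ 1 := by
  have hpos : (0:ℝ) < 1 - x := by linarith
  have h1 : (1 - x) ^ q ≤ Real.exp (-(q * x)) := by
    rw [Real.rpow_def_of_pos hpos q]
    apply Real.exp_le_exp.2
    have := Real.log_le_sub_one_of_pos hpos
    nlinarith
  have h2 : (1 + q * x) ≤ Real.exp (q * x) := by
    have := Real.add_one_le_exp (q * x); linarith
  calc (1 - x) ^ q * (1 + q * x) ≤ Real.exp (-(q * x)) * Real.exp (q * x) :=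
        mul_le_mul h1 h2 (by positivity) (Real.exp_pos _).le
    _ = 1 := by rw [← Real.exp_add]; simp

lemma aux_key (p : ℝ) (hp : 1 < p) (N : ℕ) (hN : 1 ≤ N) :
    (1 + (1 - 1 / p) / (N : ℝ)) ^ (1 / (p - 1)) ≤ (N : ℝ) * p / ((N : ℝ) * p - 1) := by
  have hN1 : (1:ℝ) ≤ (N:ℝ) := by exact_mod_cast hN
  have hm : (1:ℝ) < (N:ℝ) * p := by nlinarith
  have hq : (0:ℝ) < p - 1 := by linarith
  have hx0 : (0:ℝ) < 1 / ((N:ℝ) * p) := by positivity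
  have hx1 : 1 / ((N:ℝ) * p) < 1 := by
    rw [div_lt_one (by linarith)]; exact hm
  have key := aux_exp_ineq (1 / ((N:ℝ) * p)) (p - 1) hx0 hx1 hq
  have hbase : 1 + (p - 1) * (1 / ((N:ℝ) * p)) = 1 + (1 - 1 / p) / (N : ℝ) := by
    field_simp
  have h1mx : (1:ℝ) - 1 / ((N:ℝ) * p) = ((N:ℝ) * p - 1) / ((N:ℝ) * p) := by
    field_simp
  rw [hbase, h1mx] at key
  have hfrac : (0:ℝ) < ((N:ℝ) * p - 1) / ((N:ℝ) * p) :=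
    div_pos (by linarith) (by linarith)
  have hpow : (0:ℝ) < (((N:ℝ) * p - 1) / ((N:ℝ) * p)) ^ (p - 1) :=
    Real.rpow_pos_of_pos hfrac _
  have hBpos : (0:ℝ) < 1 + (1 - 1 / p) / (N : ℝ) := by
    have h1p : 1 / p < 1 := by rw [div_lt_one (by linarith)]; exact hp
    have : (0:ℝ) < (1 - 1/p) / (N:ℝ) := div_pos (by linarith) (by linarith)
    linarith
  have hB : 1 + (1 - 1 / p) / (N : ℝ) ≤ (((N:ℝ) * p) / ((N:ℝ) * p - 1)) ^ (p - 1) := by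
    have h' : 1 + (1 - 1 / p) / (N : ℝ) ≤ 1 / (((N:ℝ) * p - 1) / ((N:ℝ) * p)) ^ (p - 1) := by
      rw [le_div_iff₀ hpow]
      nlinarith [key]
    calc 1 + (1 - 1 / p) / (N : ℝ)
        ≤ 1 / (((N:ℝ) * p - 1) / ((N:ℝ) * p)) ^ (p - 1) := h'
      _ = (((N:ℝ) * p) / ((N:ℝ) * p - 1)) ^ (p - 1) := by
          rw [one_div, ← Real.inv_rpow hfrac.le, inv_div]
  have := Real.rpow_le_rpow hBpos.le hB (by positivity : (0:ℝ) ≤ 1 / (p - 1))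
  calc (1 + (1 - 1 / p) / (N : ℝ)) ^ (1 / (p - 1))
      ≤ ((((N:ℝ) * p) / ((N:ℝ) * p - 1)) ^ (p - 1)) ^ (1 / (p - 1)) := this
    _ = (N : ℝ) * p / ((N : ℝ) * p - 1) := by
        rw [← Real.rpow_mul (le_of_lt (div_pos (by linarith) (by linarith))), mul_one_div_cancel (by linarith : p - 1 ≠ 0),
          Real.rpow_one]

lemma aux_sum (p : ℝ) (hp : 1 < p) (n : ℕ) :
    ∑ k ∈ Finset.Icc 1 n,
        ∏ i ∈ Finset.Icc k n, (1 + (1 - 1 / p) / (i : ℝ)) ^ (1 / (p - 1)) ≤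
      p / (p - 1) * n := by
  induction n with
  | zero => simp
  | succ n ih =>
    set f : ℕ → ℝ := fun i => (1 + (1 - 1 / p) / (i : ℝ)) ^ (1 / (p - 1)) with hf
    have hrw : ∑ k ∈ Finset.Icc 1 (n+1), ∏ i ∈ Finset.Icc k (n+1), f i =
        f (n+1) * ((∑ k ∈ Finset.Icc 1 n, ∏ i ∈ Finset.Icc k n, f i) + 1) := by
      rw [Finset.sum_congr rfl
        (fun k hk => Finset.prod_Icc_succ_top (Finset.mem_Icc.1 hk).2 f)]
      rw [← Finset.sum_mul, Finset.sum_Icc_succ_top (by omega : 1 ≤ n+1),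
        Finset.Icc_eq_empty (by omega : ¬ (n+1 ≤ n)), Finset.prod_empty]
      ring
    have h1p : 1 / p < 1 := by rw [div_lt_one (by linarith)]; exact hp
    have hq : (0:ℝ) < p - 1 := by linarith
    have hfpos : 0 ≤ f (n+1) := by
      apply Real.rpow_nonneg
      have : (0:ℝ) ≤ (1 - 1/p) / ((n+1 : ℕ) : ℝ) := by
        apply div_nonneg (by linarith) (by positivity)
      linarith
    have hkey := aux_key p hp (n+1) (by omega)
    have hT1 : (0:ℝ) ≤ p / (p - 1) * n + 1 := by positivity
    have hM : (((n+1 : ℕ)) : ℝ) * p / ((((n+1 : ℕ)) : ℝ) * p - 1) * (p / (p - 1) * n + 1)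
        = p / (p - 1) * ((n+1 : ℕ) : ℝ) := by
      have hm : (1:ℝ) < (((n+1 : ℕ)) : ℝ) * p := by
        have : (1:ℝ) ≤ (((n+1 : ℕ)) : ℝ) := by exact_mod_cast Nat.one_le_iff_ne_zero.2 (by omega)
        nlinarith
      have hne1 : p - 1 ≠ 0 := ne_of_gt hq
      have hne2 : ((n:ℝ)+1) * p - 1 ≠ 0 := by
        push_cast at hm; exact ne_of_gt (by linarith)
      push_cast
      rw [div_mul_eq_mul_div, div_eq_iff hne2]
      field_simp
      ring
    calc ∑ k ∈ Finset.Icc 1 (n+1), ∏ i ∈ Finset.Icc k (n+1), f i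
        = f (n+1) * ((∑ k ∈ Finset.Icc 1 n, ∏ i ∈ Finset.Icc k n, f i) + 1) := hrw
      _ ≤ f (n+1) * (p / (p - 1) * n + 1) := by
          apply mul_le_mul_of_nonneg_left (by linarith [ih]) hfpos
      _ ≤ (((n+1 : ℕ)) : ℝ) * p / ((((n+1 : ℕ)) : ℝ) * p - 1) * (p / (p - 1) * n + 1) := by
          apply mul_le_mul_of_nonneg_right _ hT1
          exact hkey
      _ = p / (p - 1) * ((n+1 : ℕ) : ℝ) := hM

/-- The weight factors in the improved Hardy inequality are at most `p/(p-1)`. -/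
theorem improved_hardy_weights_le (p : ℝ) (hp : 1 < p) (n : ℕ) (hn : 1 ≤ n) :
    (∑ k ∈ Finset.Icc 1 n,
        ∏ i ∈ Finset.Icc k n, (1 + (1 - 1 / p) / (i : ℝ)) ^ (1 / (p - 1))) / (n : ℝ) ≤
      p / (p - 1) := by
  have hn0 : (0:ℝ) < (n : ℝ) := by exact_mod_cast Nat.pos_of_ne_zero (by omega)
  rw [div_le_iff₀ hn0]
  exact aux_sum p hp n
end
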